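/- arXiv:1412.0538 — 7 statements merged into one kernel-verified Lean document; each statement's English description precedes it below -/
import Mathlib

section
/- Let G = (V, E) be a finite connected graph with nonnegative edge weights and nonnegative vertex weights, with start vertex v_s, and let T be a minimum spanning tree of G (a spanning tree minimizing the total edge weight). Then the minimum agent count over all closed covering walks from v_s that use only edges of T is at most twice the minimum agent count over all covering walks from v_s in G. In particular, an optimal deployment strategy on the MST is a 2-approximation of the optimal deployment strategy on G. -/
/-! Strategic deployment: common definitions.

A walk is scanned with a state consisting of the set of already-visited
vertices, the number `curr` of currently available (non-settled) agents, and
the number `add` of additional agents (beyond `N = ∑ v, wV v`) recruited so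
far.  Crossing an edge `e` requires `curr ≥ wE e` (topping up `add`
otherwise); the first visit of a vertex `v` settles `wV v` agents there. -/

namespace Deploy

structure St (V : Type*) (α : Type*) where
  visited : Finset V
  curr : α
  add : α

variable {V : Type*} [DecidableEq V] {α : Type*} [AddCommMonoid α] [LinearOrder α] [IsOrderedAddMonoid α] [Sub α]

/-- Scan step for crossing an edge `e`. -/
def crossEdge (wE : Sym2 V → α) (e : Sym2 V) (s : St V α) : St V α :=
  if s.curr < wE e then ⟨s.visited, wE e, s.add + (wE e - s.curr)⟩ else s

/-- Scan step for visiting a vertex `v` (only first visits have an effect). -/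
def visitVtx (wV : V → α) (v : V) (s : St V α) : St V α :=
  if v ∈ s.visited then s
  else if s.curr < wV v then ⟨insert v s.visited, 0, s.add + (wV v - s.curr)⟩
  else ⟨insert v s.visited, s.curr - wV v, s.add⟩

variable {G : SimpleGraph V}

/-- Scanning a walk: alternately cross the next edge and visit the next vertex. -/
def scanWalk (wE : Sym2 V → α) (wV : V → α) : {u t : V} → G.Walk u t → St V α → St V α
  | _, _, .nil, s => s
  | u, _, .cons (v := v) _ p, s => scanWalk wE wV p (visitVtx wV v (crossEdge wE s(u, v) s))

/-- The agent count of a walk `p` starting at `vs`: the scan starts with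
`curr = N = ∑ v, wV v` and `add = 0`, first visiting the start vertex; the
agent count is `N` plus the final value of `add`. -/
def agentCount [Fintype V] (wE : Sym2 V → α) (wV : V → α) {vs t : V} (p : G.Walk vs t) : α :=
  (∑ v, wV v) + (scanWalk wE wV p (visitVtx wV vs ⟨∅, ∑ v, wV v, 0⟩)).add

/-- A walk is covering if every vertex of the graph appears on it. -/
def IsCovering {vs t : V} (p : G.Walk vs t) : Prop := ∀ v : V, v ∈ p.support

end Deploy


namespace DeployAux
open Deploy SimpleGraph

variable {V : Type*} [DecidableEq V] {G : SimpleGraph V}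
variable (wE : Sym2 V → NNReal) (wV : V → NNReal)

/-- The scan invariant. -/
def Inv (N : NNReal) (s : St V NNReal) : Prop :=
  s.curr + ∑ v ∈ s.visited, wV v = N + s.add

lemma crossEdge_inv {N : NNReal} {e : Sym2 V} {s : St V NNReal} (h : Inv wV N s) :
    Inv wV N (crossEdge wE e s) := by
  unfold Inv crossEdge at *
  split
  · next hlt =>
    simp only
    have h1 : s.curr + (wE e - s.curr) = wE e := add_tsub_cancel_of_le hlt.le
    calc wE e + ∑ v ∈ s.visited, wV v
        = (s.curr + (wE e - s.curr)) + ∑ v ∈ s.visited, wV v := by rw [h1]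
      _ = (s.curr + ∑ v ∈ s.visited, wV v) + (wE e - s.curr) := by ring
      _ = (N + s.add) + (wE e - s.curr) := by rw [h]
      _ = N + (s.add + (wE e - s.curr)) := by ring
  · exact h

lemma visitVtx_inv {N : NNReal} {v : V} {s : St V NNReal} (h : Inv wV N s) :
    Inv wV N (visitVtx wV v s) := by
  unfold Inv visitVtx at *
  split
  · exact h
  · next hv =>
    split
    · next hlt =>
      simp only
      rw [Finset.sum_insert hv]
      have h1 : s.curr + (wV v - s.curr) = wV v := add_tsub_cancel_of_le hlt.le
      calc 0 + (wV v + ∑ x ∈ s.visited, wV x)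
          = (s.curr + (wV v - s.curr)) + ∑ x ∈ s.visited, wV x := by rw [h1]; ring
        _ = (s.curr + ∑ x ∈ s.visited, wV x) + (wV v - s.curr) := by ring
        _ = (N + s.add) + (wV v - s.curr) := by rw [h]
        _ = N + (s.add + (wV v - s.curr)) := by ring
    · next hge =>
      simp only
      rw [Finset.sum_insert hv]
      have h1 : (s.curr - wV v) + wV v = s.curr := tsub_add_cancel_of_le (not_lt.mp hge)
      calc (s.curr - wV v) + (wV v + ∑ x ∈ s.visited, wV x)
          = ((s.curr - wV v) + wV v) + ∑ x ∈ s.visited, wV x := by ring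
        _ = s.curr + ∑ x ∈ s.visited, wV x := by rw [h1]
        _ = N + s.add := h

lemma scanWalk_inv {N : NNReal} : ∀ {u t : V} (p : G.Walk u t) (s : St V NNReal),
    Inv wV N s → Inv wV N (scanWalk wE wV p s)
  | _, _, .nil, _, h => h
  | _, _, .cons _ p, s, h =>
    scanWalk_inv p _ (visitVtx_inv wV (crossEdge_inv wE wV h))

lemma crossEdge_add_mono {e : Sym2 V} (s : St V NNReal) : s.add ≤ (crossEdge wE e s).add := by
  unfold crossEdge; split
  · exact le_self_add
  · exact le_rfl

lemma visitVtx_add_mono {v : V} (s : St V NNReal) : s.add ≤ (visitVtx wV v s).add := by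
  unfold visitVtx; split
  · exact le_rfl
  · split
    · exact le_self_add
    · exact le_rfl

lemma scanWalk_add_mono : ∀ {u t : V} (p : G.Walk u t) (s : St V NNReal),
    s.add ≤ (scanWalk wE wV p s).add
  | _, _, .nil, _ => le_rfl
  | u, _, .cons (v := v) _ p, s =>
    ((crossEdge_add_mono wE s).trans
      (visitVtx_add_mono wV (crossEdge wE s(u, v) s))).trans
    (scanWalk_add_mono p _)

lemma crossEdge_visited {e : Sym2 V} (s : St V NNReal) :
    (crossEdge wE e s).visited = s.visited := by
  unfold crossEdge; split <;> rfl

lemma visitVtx_visited_mono {v : V} (s : St V NNReal) :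
    s.visited ⊆ (visitVtx wV v s).visited := by
  unfold visitVtx; split
  · exact subset_rfl
  · split
    · exact Finset.subset_insert _ _
    · exact Finset.subset_insert _ _

lemma mem_visitVtx_visited (v : V) (s : St V NNReal) : v ∈ (visitVtx wV v s).visited := by
  unfold visitVtx; split
  · next h => exact h
  · split
    · exact Finset.mem_insert_self _ _
    · exact Finset.mem_insert_self _ _

lemma scanWalk_visited_mono : ∀ {u t : V} (p : G.Walk u t) (s : St V NNReal),
    s.visited ⊆ (scanWalk wE wV p s).visited
  | _, _, .nil, _ => subset_rfl
  | u, _, .cons (v := v) _ p, s => by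
    refine subset_trans ?_ (scanWalk_visited_mono p _)
    rw [← crossEdge_visited wE (e := s(u, v)) s]
    exact visitVtx_visited_mono wV _

lemma support_subset_scanWalk_visited : ∀ {u t : V} (p : G.Walk u t) (s : St V NNReal),
    u ∈ s.visited → ∀ v ∈ p.support, v ∈ (scanWalk wE wV p s).visited
  | _, _, .nil, s, hu, v, hv => by
    rw [SimpleGraph.Walk.support_nil, List.mem_singleton] at hv
    subst hv; exact hu
  | u, _, .cons (v := w) _ p, s, hu, v, hv => by
    rw [SimpleGraph.Walk.support_cons, List.mem_cons] at hv
    rcases hv with rfl | hv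
    · refine scanWalk_visited_mono wE wV p _ ?_
      refine visitVtx_visited_mono wV _ ?_
      rw [crossEdge_visited]
      exact hu
    · exact support_subset_scanWalk_visited p _ (mem_visitVtx_visited wV w _) v hv

lemma scanWalk_curr_le {M : NNReal} : ∀ {u t : V} (p : G.Walk u t) (s : St V NNReal),
    s.curr ≤ M → (∀ f ∈ p.edges, wE f ≤ M) → (scanWalk wE wV p s).curr ≤ M
  | _, _, .nil, _, h, _ => h
  | u, _, .cons (v := v) _ p, s, h, hE => by
    apply scanWalk_curr_le p
    · have h1 : (crossEdge wE s(u, v) s).curr ≤ M := by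
        unfold crossEdge; split
        · exact hE _ (by rw [SimpleGraph.Walk.edges_cons]; exact List.mem_cons_self)
        · exact h
      unfold visitVtx; split
      · exact h1
      · split
        · exact zero_le
        · exact (tsub_le_self).trans h1
    · intro f hf
      exact hE f (by rw [SimpleGraph.Walk.edges_cons]; exact List.mem_cons_of_mem _ hf)

lemma edge_le_scanWalk_add {N : NNReal} : ∀ {u t : V} (p : G.Walk u t) (s : St V NNReal),
    Inv wV N s → ∀ f ∈ p.edges, wE f ≤ N + (scanWalk wE wV p s).add
  | _, _, .nil, _, _, f, hf => by simp at hf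
  | u, _, .cons (v := v) _ p, s, h, f, hf => by
    rw [SimpleGraph.Walk.edges_cons, List.mem_cons] at hf
    rcases hf with rfl | hf
    · have h1 : Inv wV N (crossEdge wE s(u, v) s) := crossEdge_inv wE wV h
      have hcurr : wE s(u, v) ≤ (crossEdge wE s(u, v) s).curr := by
        unfold crossEdge; split
        · exact le_rfl
        · next hn => exact not_lt.mp hn
      have h2 : wE s(u, v) ≤ N + (crossEdge wE s(u, v) s).add := by
        calc wE s(u, v) ≤ (crossEdge wE s(u, v) s).curr := hcurr
          _ ≤ (crossEdge wE s(u, v) s).curr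
              + ∑ x ∈ (crossEdge wE s(u, v) s).visited, wV x := le_self_add
          _ = N + (crossEdge wE s(u, v) s).add := h1
      refine h2.trans (add_le_add le_rfl ?_)
      exact (visitVtx_add_mono wV _).trans (scanWalk_add_mono wE wV p _)
    · exact edge_le_scanWalk_add p _ (visitVtx_inv wV (crossEdge_inv wE wV h)) f hf

lemma inv_init [Fintype V] (vs : V) :
    Inv wV (∑ v, wV v) (visitVtx wV vs ⟨∅, ∑ v, wV v, 0⟩) := by
  apply visitVtx_inv
  unfold Inv
  simp

lemma agentCount_eq_of_covering [Fintype V] {vs t : V} (p : G.Walk vs t)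
    (hp : IsCovering p) :
    agentCount wE wV p
      = (∑ v, wV v) + (scanWalk wE wV p (visitVtx wV vs ⟨∅, ∑ v, wV v, 0⟩)).curr := by
  set N : NNReal := ∑ v, wV v with hNdef
  set s0 : St V NNReal := visitVtx wV vs ⟨∅, N, 0⟩ with hs0
  have hfin : Inv wV N (scanWalk wE wV p s0) := scanWalk_inv wE wV p s0 (inv_init wV vs)
  have hvis : (scanWalk wE wV p s0).visited = Finset.univ := by
    apply Finset.eq_univ_of_forall
    intro v
    exact support_subset_scanWalk_visited wE wV p s0 (mem_visitVtx_visited wV vs _) v (hp v)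
  unfold Inv at hfin
  rw [hvis] at hfin
  have : (scanWalk wE wV p s0).curr + N = N + (scanWalk wE wV p s0).add := hfin
  have h2 : (scanWalk wE wV p s0).add = (scanWalk wE wV p s0).curr := by
    have := this
    rw [add_comm _ N] at this
    exact (add_left_cancel this).symm
  unfold agentCount
  rw [← hNdef, ← hs0, h2]

lemma findCross (P : V → Prop) (b : V) (hnb : ¬ P b) :
    ∀ {u t : V} (q : G.Walk u t), P u → b ∈ q.support →
      ∃ x y, s(x, y) ∈ q.edges ∧ P x ∧ ¬ P y
  | u, _, .nil, hu, hb => by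
    rw [SimpleGraph.Walk.support_nil, List.mem_singleton] at hb
    exact absurd (hb ▸ hu) hnb
  | u, t, .cons (v := v) h q, hu, hb => by
    by_cases hv : P v
    · rw [SimpleGraph.Walk.support_cons, List.mem_cons] at hb
      rcases hb with rfl | hb
      · exact absurd hu hnb
      · obtain ⟨x, y, hxy, hPx, hPy⟩ := findCross P b hnb q hv hb
        exact ⟨x, y, by rw [SimpleGraph.Walk.edges_cons]; exact List.mem_cons_of_mem _ hxy,
          hPx, hPy⟩
    · exact ⟨u, v, by rw [SimpleGraph.Walk.edges_cons]; exact List.mem_cons_self, hu, hv⟩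

lemma delete_edge_reach {T : SimpleGraph V} {a b : V} :
    ∀ {v c : V} (_ : T.Walk v c),
      ((T \ SimpleGraph.fromEdgeSet {s(a, b)}).Reachable c a
        ∨ (T \ SimpleGraph.fromEdgeSet {s(a, b)}).Reachable c b) →
      ((T \ SimpleGraph.fromEdgeSet {s(a, b)}).Reachable v a
        ∨ (T \ SimpleGraph.fromEdgeSet {s(a, b)}).Reachable v b)
  | _, _, .nil, h => h
  | v, c, .cons (v := d) hvd w, h => by
    have ih := delete_edge_reach w h
    by_cases hsd : s(v, d) = s(a, b)
    · rw [Sym2.eq_iff] at hsd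
      rcases hsd with ⟨rfl, rfl⟩ | ⟨rfl, rfl⟩
      · exact Or.inl (SimpleGraph.Reachable.refl _)
      · exact Or.inr (SimpleGraph.Reachable.refl _)
    · have hH : (T \ SimpleGraph.fromEdgeSet {s(a, b)}).Adj v d := by
        rw [SimpleGraph.sdiff_adj]
        refine ⟨hvd, fun hc => ?_⟩
        rw [SimpleGraph.fromEdgeSet_adj, Set.mem_singleton_iff] at hc
        exact hsd hc.1
      rcases ih with h' | h'
      · exact Or.inl (hH.reachable.trans h')
      · exact Or.inr (hH.reachable.trans h')

lemma exists_covering_closed {V : Type*} [Fintype V] [DecidableEq V] {T : SimpleGraph V}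
    (hc : T.Connected) (vs : V) : ∃ p : T.Walk vs vs, ∀ v, v ∈ p.support := by
  suffices h : ∀ s : Finset V, ∃ p : T.Walk vs vs, ∀ v ∈ s, v ∈ p.support by
    obtain ⟨p, hp⟩ := h Finset.univ
    exact ⟨p, fun v => hp v (Finset.mem_univ v)⟩
  intro s
  induction s using Finset.induction with
  | empty => exact ⟨SimpleGraph.Walk.nil, by simp⟩
  | @insert a s _ ih =>
    obtain ⟨p, hp⟩ := ih
    obtain ⟨w⟩ := hc.preconnected vs a
    refine ⟨(w.append w.reverse).append p, ?_⟩
    intro v hv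
    rw [Finset.mem_insert] at hv
    rw [SimpleGraph.Walk.mem_support_append_iff]
    rcases hv with rfl | hv
    · left
      rw [SimpleGraph.Walk.mem_support_append_iff]
      exact Or.inl w.end_mem_support
    · exact Or.inr (hp v hv)

end DeployAux

namespace DeployAux
open Deploy SimpleGraph

open scoped Classical in
lemma mst_cut {V : Type*} [Fintype V] [DecidableEq V] (G : SimpleGraph V)
    (wE : Sym2 V → NNReal)
    (T : SimpleGraph V) (hTG : T ≤ G) (hT : T.IsTree)
    (hmin : ∀ T' : SimpleGraph V, T' ≤ G → T'.IsTree →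
      ∑ e ∈ T.edgeFinset, wE e ≤ ∑ e ∈ T'.edgeFinset, wE e)
    {a b : V} (hab : T.Adj a b) {vs t : V} (q : G.Walk vs t) (hq : Deploy.IsCovering q) :
    ∃ f ∈ q.edges, wE s(a, b) ≤ wE f := by
  set H : SimpleGraph V := T \ SimpleGraph.fromEdgeSet {s(a, b)} with hH
  have hbridge : T.IsBridge s(a, b) := isAcyclic_iff_forall_adj_isBridge.mp hT.2 hab
  have hnr : ¬ H.Reachable a b := isBridge_iff.mp hbridge
  have reach_or : ∀ v : V, H.Reachable v a ∨ H.Reachable v b := by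
    intro v
    obtain ⟨w⟩ := hT.1.preconnected v a
    exact delete_edge_reach w (Or.inl (SimpleGraph.Reachable.refl _))
  -- the main exchange argument
  have main : ∀ x y : V, s(x, y) ∈ q.edges → H.Reachable x a → ¬ H.Reachable y a →
      wE s(a, b) ≤ wE s(x, y) := by
    intro x y hxyq Rxa nRya
    by_contra hcon
    have hlt : wE s(x, y) < wE s(a, b) := not_le.mp hcon
    have hGxy : G.Adj x y := by
      have h0 := q.edges_subset_edgeSet hxyq
      rwa [SimpleGraph.mem_edgeSet] at h0
    have hne : x ≠ y := hGxy.ne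
    have hyb : H.Reachable y b := (reach_or y).resolve_left nRya
    set T'' : SimpleGraph V := H ⊔ SimpleGraph.fromEdgeSet {s(x, y)} with hT''
    have hfadj : (SimpleGraph.fromEdgeSet {s(x, y)}).Adj x y := by
      rw [SimpleGraph.fromEdgeSet_adj]
      exact ⟨Set.mem_singleton _, hne⟩
    have hxyT'' : T''.Adj x y := Or.inr hfadj
    have hHT'' : H ≤ T'' := le_sup_left
    -- connectivity
    have key : ∀ v : V, T''.Reachable v x := by
      intro v
      rcases reach_or v with h | h
      · exact (h.mono hHT'').trans ((Rxa.mono hHT'').symm)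
      · exact ((h.mono hHT'').trans ((hyb.mono hHT'').symm)).trans hxyT''.symm.reachable
    have hconn : T''.Connected := by
      haveI : Nonempty V := ⟨x⟩
      exact ⟨fun u v => (key u).trans (key v).symm⟩
    -- acyclicity
    have hacyc : T''.IsAcyclic := by
      intro u c hc
      by_cases hfc : s(x, y) ∈ c.edges
      · have hreach := (adj_and_reachable_delete_edges_iff_exists_cycle.mpr ⟨u, c, hc, hfc⟩).2
        have hle : T'' \ SimpleGraph.fromEdgeSet {s(x, y)} ≤ H := by
          intro u' v' h'
          rw [SimpleGraph.sdiff_adj] at h'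
          rcases h'.1 with hH' | hfe
          · exact hH'
          · exact absurd hfe h'.2
        exact nRya (((hreach.mono hle).symm).trans Rxa)
      · have hsub : ∀ f ∈ c.edges, f ∈ T.edgeSet := by
          intro f hf
          have hf' : f ∈ T''.edgeSet := c.edges_subset_edgeSet hf
          induction f using Sym2.ind with
          | _ u' v' =>
            rw [SimpleGraph.mem_edgeSet] at hf' ⊢
            rcases hf' with hH' | hfe
            · exact (SimpleGraph.sdiff_adj _ _ _ _).mp hH' |>.1
            · rw [SimpleGraph.fromEdgeSet_adj, Set.mem_singleton_iff] at hfe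
              exact absurd (hfe.1 ▸ hf) hfc
        exact hT.2 (c.transfer T hsub) (hc.transfer hsub)
    have hT''tree : T''.IsTree := ⟨hconn, hacyc⟩
    have hT''G : T'' ≤ G := by
      refine sup_le (le_trans sdiff_le hTG) ?_
      intro u' v' h'
      rw [SimpleGraph.fromEdgeSet_adj, Set.mem_singleton_iff] at h'
      rw [← SimpleGraph.mem_edgeSet, h'.1, SimpleGraph.mem_edgeSet]
      exact hGxy
    -- edge sets
    have hfnotT : s(x, y) ∉ T.edgeFinset := by
      intro hmem
      rw [SimpleGraph.mem_edgeFinset, SimpleGraph.mem_edgeSet] at hmem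
      have hne_e : s(x, y) ≠ s(a, b) := fun h => absurd (h ▸ hlt) (lt_irrefl _)
      have hHxy : H.Adj x y := by
        rw [SimpleGraph.sdiff_adj]
        refine ⟨hmem, fun hc => ?_⟩
        rw [SimpleGraph.fromEdgeSet_adj, Set.mem_singleton_iff] at hc
        exact hne_e hc.1
      exact nRya (hHxy.symm.reachable.trans Rxa)
    have heT : s(a, b) ∈ T.edgeFinset := by
      rw [SimpleGraph.mem_edgeFinset, SimpleGraph.mem_edgeSet]; exact hab
    have hsubset : ∀ (i : Fintype T''.edgeSet),
        @SimpleGraph.edgeFinset V T'' i ⊆ insert s(x, y) (T.edgeFinset.erase s(a, b)) := by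
      intro i e' he'
      rw [SimpleGraph.mem_edgeFinset] at he'
      induction e' using Sym2.ind with
      | _ u' v' =>
        rw [SimpleGraph.mem_edgeSet] at he'
        rcases he' with hH' | hfe
        · rw [SimpleGraph.sdiff_adj] at hH'
          refine Finset.mem_insert_of_mem (Finset.mem_erase.mpr ⟨?_, ?_⟩)
          · intro heq
            apply hH'.2
            rw [SimpleGraph.fromEdgeSet_adj, Set.mem_singleton_iff]
            exact ⟨heq, hH'.1.ne⟩
          · rw [SimpleGraph.mem_edgeFinset, SimpleGraph.mem_edgeSet]; exact hH'.1
        · rw [SimpleGraph.fromEdgeSet_adj, Set.mem_singleton_iff] at hfe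
          rw [hfe.1]
          exact Finset.mem_insert_self _ _
    refine absurd (hmin T'' hT''G hT''tree) (not_le.mpr ?_)
    refine lt_of_le_of_lt
      (Finset.sum_le_sum_of_subset (t := insert s(x, y) (T.edgeFinset.erase s(a, b))) (hsubset _))
      ?_
    calc ∑ e ∈ insert s(x, y) (T.edgeFinset.erase s(a, b)), wE e
        = wE s(x, y) + ∑ e ∈ T.edgeFinset.erase s(a, b), wE e := by
          rw [Finset.sum_insert (fun hc => hfnotT (Finset.mem_of_mem_erase hc))]
      _ < wE s(a, b) + ∑ e ∈ T.edgeFinset.erase s(a, b), wE e := add_lt_add_of_lt_of_le hlt le_rfl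
      _ = ∑ e ∈ T.edgeFinset, wE e := Finset.add_sum_erase _ wE heT
  -- find the crossing edge
  by_cases hvs : H.Reachable vs a
  · obtain ⟨x, y, he, hPx, hPy⟩ :=
      findCross (fun v => H.Reachable v a) b (fun h => hnr h.symm) q hvs (hq b)
    exact ⟨s(x, y), he, main x y he hPx hPy⟩
  · obtain ⟨x, y, he, hPx, hPy⟩ :=
      findCross (fun v => ¬ H.Reachable v a) a
        (fun h => h (SimpleGraph.Reachable.refl _)) q hvs (hq a)
    have he' : s(y, x) ∈ q.edges := by rw [Sym2.eq_swap]; exact he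
    have : wE s(a, b) ≤ wE s(y, x) := main y x he' (not_not.mp hPy) hPx
    rw [show s(y, x) = s(x, y) from Sym2.eq_swap] at this
    exact ⟨s(x, y), he, this⟩

end DeployAux


open scoped Classical in
/-- an optimal deployment strategy on a minimum spanning tree `T`
of a connected weighted graph `G` (all agents starting at `v_s`, returning to
`v_s` at the end) is a 2-approximation of the optimal deployment strategy on
`G` itself: there is a closed covering walk of `T` whose agent count is at
most twice the agent count of every covering walk of `G`. -/
theorem mst_two_approximation
    {V : Type*} [Fintype V] [DecidableEq V] (G : SimpleGraph V) (hG : G.Connected)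
    (wE : Sym2 V → NNReal) (wV : V → NNReal) (vs : V)
    (T : SimpleGraph V) (hTG : T ≤ G) (hT : T.IsTree)
    (hmin : ∀ T' : SimpleGraph V, T' ≤ G → T'.IsTree →
      ∑ e ∈ T.edgeFinset, wE e ≤ ∑ e ∈ T'.edgeFinset, wE e) :
    ∃ p : T.Walk vs vs, Deploy.IsCovering p ∧
      ∀ (t : V) (q : G.Walk vs t), Deploy.IsCovering q →
        Deploy.agentCount wE wV p ≤ 2 * Deploy.agentCount wE wV q := by
  obtain ⟨p, hp⟩ := DeployAux.exists_covering_closed hT.1 vs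
  refine ⟨p, hp, ?_⟩
  intro t q hq
  set N : NNReal := ∑ v, wV v with hN
  have hpeq := DeployAux.agentCount_eq_of_covering wE wV p hp
  have hNq : N ≤ Deploy.agentCount wE wV q := by unfold Deploy.agentCount; exact le_self_add
  set W : NNReal := T.edgeFinset.sup wE with hW
  have hWq : W ≤ Deploy.agentCount wE wV q := by
    refine Finset.sup_le ?_
    intro e he
    rw [SimpleGraph.mem_edgeFinset] at he
    induction e using Sym2.ind with
    | _ a b =>
      rw [SimpleGraph.mem_edgeSet] at he
      obtain ⟨f, hfq, hef⟩ := DeployAux.mst_cut G wE T hTG hT hmin he q hq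
      refine hef.trans ?_
      exact DeployAux.edge_le_scanWalk_add wE wV q _ (DeployAux.inv_init wV vs) f hfq
  have hcb : (Deploy.scanWalk wE wV p (Deploy.visitVtx wV vs ⟨∅, N, 0⟩)).curr ≤ N ⊔ W := by
    refine DeployAux.scanWalk_curr_le wE wV p _ ?_ ?_
    · refine le_trans ?_ (le_sup_left : N ≤ N ⊔ W)
      unfold Deploy.visitVtx
      split
      · exact le_rfl
      · split
        · exact zero_le
        · exact tsub_le_self
    · intro f hf
      refine le_trans ?_ (le_sup_right : W ≤ N ⊔ W)
      refine Finset.le_sup ?_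
      rw [SimpleGraph.mem_edgeFinset]
      exact p.edges_subset_edgeSet hf
  calc Deploy.agentCount wE wV p
      = N + (Deploy.scanWalk wE wV p (Deploy.visitVtx wV vs ⟨∅, N, 0⟩)).curr := hpeq
    _ ≤ N + (N ⊔ W) := add_le_add le_rfl hcb
    _ ≤ Deploy.agentCount wE wV q + Deploy.agentCount wE wV q :=
        add_le_add hNq (sup_le hNq hWq)
    _ = 2 * Deploy.agentCount wE wV q := (two_mul _).symm
end

section
/- Let T be a finite weighted tree rooted at the start vertex v_s, with nonnegative edge and vertex weights. Then there exists an agent-minimal closed covering walk from v_s that visits the collected subtrees of T in decreasing order of the weights of their dominating edges, and that, upon first entering each collected subtree, fully explores it (visiting all of its vertices, e.g., by depth-first search) before leaving it and never re-enters it afterwards. -/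
namespace Deploy

variable {V : Type*} [DecidableEq V] {T : SimpleGraph V}

/-- A leaf of a rooted tree: a vertex of degree 1 different from the root. -/
def IsLeaf (T : SimpleGraph V) (vs b : V) : Prop :=
  Nat.card (T.neighborSet b) = 1 ∧ b ≠ vs

/-- The unique path between two vertices of a tree, as a walk. -/
noncomputable def treePath (hT : T.IsTree) (u v : V) : T.Walk u v :=
  (hT.existsUnique_path u v).choose

/-- The dominating edge `e(b)` of a vertex `b`: an edge of maximum weight on
the unique path from the root `vs` to `b`, chosen among ties as the one
closest to the root (`List.argmax` returns the first maximising element). -/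
noncomputable def domEdge (hT : T.IsTree) (wE : Sym2 V → NNReal) (vs b : V) : Sym2 V :=
  ((treePath hT vs b).edges.argmax wE).getD s(vs, vs)

/-- The position of the dominating edge of `b` on the path from `vs` to `b`. -/
noncomputable def domIdx (hT : T.IsTree) (wE : Sym2 V → NNReal) (vs b : V) : ℕ :=
  (treePath hT vs b).edges.idxOf (domEdge hT wE vs b)

/-- The vertices of the path `T(b)` from `v(b)` to `b`, where `v(b)` is the
endpoint of the dominating edge `e(b)` that is farther from the root: the
suffix of the path from `vs` to `b` strictly beyond the dominating edge. -/
noncomputable def tailVerts (hT : T.IsTree) (wE : Sym2 V → NNReal) (vs b : V) : List V :=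
  (treePath hT vs b).support.drop (domIdx hT wE vs b + 1)

/-- The set of dominating edges of leaves of the rooted tree. -/
def DomEdges (hT : T.IsTree) (wE : Sym2 V → NNReal) (vs : V) : Set (Sym2 V) :=
  {e | ∃ b, IsLeaf T vs b ∧ domEdge hT wE vs b = e}

/-- The vertex set of the collected subtree dominated by the edge `e`: the
union of the paths `T(b)` over all leaves `b` whose dominating edge is `e`. -/
def csVerts (hT : T.IsTree) (wE : Sym2 V → NNReal) (vs : V) (e : Sym2 V) : Set V :=
  {v | ∃ b, IsLeaf T vs b ∧ domEdge hT wE vs b = e ∧ v ∈ tailVerts hT wE vs b}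

/-- The root `v(b)` of the collected subtree dominated by `e`: the endpoint of
`e` farther from the root, i.e. the first vertex on the common tail of the
paths of the leaves of the group. -/
noncomputable def csRoot (hT : T.IsTree) (wE : Sym2 V → NNReal) (vs : V) (e : Sym2 V) : V :=
  open scoped Classical in
  if h : ∃ b, IsLeaf T vs b ∧ domEdge hT wE vs b = e then
    (tailVerts hT wE vs h.choose).headD vs
  else vs

end Deploy

namespace Deploy

set_option linter.unusedSectionVars false

variable {V : Type*} [DecidableEq V] {T : SimpleGraph V}
variable (wE : Sym2 V → NNReal) (wV : V → NNReal)

/-- Total weight of a finite set of vertices. -/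
def wt (wV : V → NNReal) (A : Finset V) : NNReal := ∑ v ∈ A, wV v

lemma wt_mono {A B : Finset V} (h : A ⊆ B) : wt wV A ≤ wt wV B :=
  Finset.sum_le_sum_of_subset h

lemma wt_sdiff_add (A B C : Finset V) (hAB : A ⊆ B) (hBC : B ⊆ C) :
    wt wV (C \ A) = wt wV (C \ B) + wt wV (B \ A) := by
  rw [wt, wt, wt, ← Finset.sum_union ?hd, Finset.sdiff_union_sdiff_cancel hBC hAB]
  case hd =>
    rw [Finset.disjoint_left]; rintro x hx1 hx2
    exact (Finset.mem_sdiff.1 hx1).2 (Finset.mem_sdiff.1 hx2).1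

lemma max_tsub_le (a b c : NNReal) : max a b - c ≤ max (a - c) (b - c) := by
  rcases max_cases a b with ⟨h1, _⟩ | ⟨h1, _⟩ <;> rw [h1]
  · exact le_max_left _ _
  · exact le_max_right _ _

lemma visited_crossEdge (e : Sym2 V) (s : St V NNReal) :
    (crossEdge wE e s).visited = s.visited := by
  unfold crossEdge; split <;> rfl

lemma curr_le_crossEdge (e : Sym2 V) (s : St V NNReal) :
    s.curr ≤ (crossEdge wE e s).curr := by
  unfold crossEdge; split
  · exact le_of_lt (by assumption)
  · exact le_rfl

lemma wE_le_crossEdge (e : Sym2 V) (s : St V NNReal) :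
    wE e ≤ (crossEdge wE e s).curr := by
  unfold crossEdge; split
  · exact le_rfl
  · exact not_lt.1 (by assumption)

lemma visited_visitVtx (v : V) (s : St V NNReal) :
    (visitVtx wV v s).visited = insert v s.visited := by
  unfold visitVtx
  split
  · exact (Finset.insert_eq_self.2 (by assumption)).symm
  · split <;> rfl

lemma grow_visitVtx (v : V) (s : St V NNReal) :
    s.visited ⊆ (visitVtx wV v s).visited ∧
      s.curr ≤ (visitVtx wV v s).curr + wt wV ((visitVtx wV v s).visited \ s.visited) := by
  unfold visitVtx
  split
  · simp [wt]
  · rename_i hv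
    have hins : (insert v s.visited) \ s.visited = {v} := by
      ext x
      simp only [Finset.mem_sdiff, Finset.mem_insert, Finset.mem_singleton]
      constructor
      · rintro ⟨(rfl | h), h2⟩
        · rfl
        · exact absurd h h2
      · rintro rfl; exact ⟨Or.inl rfl, hv⟩
    split
    · refine ⟨Finset.subset_insert _ _, ?_⟩
      simp only [hins, wt, Finset.sum_singleton]
      calc s.curr ≤ wV v := le_of_lt (by assumption)
      _ = 0 + wV v := (zero_add _).symm
    · refine ⟨Finset.subset_insert _ _, ?_⟩
      simp only [hins, wt, Finset.sum_singleton]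
      rw [tsub_add_cancel_of_le (not_lt.1 (by assumption))]

lemma curr_visitVtx_le (v : V) (s : St V NNReal) :
    (visitVtx wV v s).curr ≤ s.curr - wt wV ((visitVtx wV v s).visited \ s.visited) := by
  unfold visitVtx
  split
  · simp [wt]
  · rename_i hv
    have hins : (insert v s.visited) \ s.visited = {v} := by
      ext x
      simp only [Finset.mem_sdiff, Finset.mem_insert, Finset.mem_singleton]
      constructor
      · rintro ⟨(rfl | h), h2⟩
        · rfl
        · exact absurd h h2
      · rintro rfl; exact ⟨Or.inl rfl, hv⟩
    split <;> simp only [hins, wt, Finset.sum_singleton]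
    · exact zero_le
    · exact le_rfl

lemma scanWalk_append {u v w : V} (p : T.Walk u v) (q : T.Walk v w) (s : St V NNReal) :
    scanWalk wE wV (p.append q) s = scanWalk wE wV q (scanWalk wE wV p s) := by
  induction p generalizing s with
  | nil => simp [scanWalk]
  | cons h p ih => simp only [SimpleGraph.Walk.cons_append, scanWalk, ih]

lemma visited_scanWalk {u v : V} (p : T.Walk u v) (s : St V NNReal) :
    (scanWalk wE wV p s).visited = s.visited ∪ p.support.tail.toFinset := by
  induction p generalizing s with
  | nil => simp [scanWalk]
  | cons h p ih =>
    rename_i a b c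
    rw [scanWalk, ih, visited_visitVtx, visited_crossEdge, SimpleGraph.Walk.support_cons,
      List.tail_cons, SimpleGraph.Walk.support_eq_cons p]
    ext x
    simp only [Finset.mem_union, Finset.mem_insert, List.toFinset_cons, List.mem_toFinset]
    tauto

lemma visited_subset_scanWalk {u v : V} (p : T.Walk u v) (s : St V NNReal) :
    s.visited ⊆ (scanWalk wE wV p s).visited := by
  rw [visited_scanWalk]; exact Finset.subset_union_left

lemma grow_scanWalk {u v : V} (p : T.Walk u v) (s : St V NNReal) :
    s.curr ≤ (scanWalk wE wV p s).curr +
      wt wV ((scanWalk wE wV p s).visited \ s.visited) := by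
  induction p generalizing s with
  | nil => simp [scanWalk, wt]
  | cons h p ih =>
    rename_i a b c
    rw [scanWalk]
    set s2 := crossEdge wE s(a, b) s with hs2
    set s1 := visitVtx wV b s2 with hs1
    have h02v : s.visited ⊆ s1.visited := by
      rw [hs1, visited_visitVtx, hs2, visited_crossEdge]
      exact Finset.subset_insert _ _
    have h01 : s.curr ≤ s1.curr + wt wV (s1.visited \ s.visited) := by
      calc s.curr ≤ s2.curr := curr_le_crossEdge wE _ s
      _ ≤ s1.curr + wt wV (s1.visited \ s2.visited) := (grow_visitVtx wV b s2).2
      _ = s1.curr + wt wV (s1.visited \ s.visited) := by rw [hs2, visited_crossEdge]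
    calc s.curr ≤ s1.curr + wt wV (s1.visited \ s.visited) := h01
    _ ≤ ((scanWalk wE wV p s1).curr + wt wV ((scanWalk wE wV p s1).visited \ s1.visited))
        + wt wV (s1.visited \ s.visited) := by gcongr; exact ih s1
    _ = _ := by
        rw [add_assoc, ← wt_sdiff_add wV _ _ _ h02v (visited_subset_scanWalk wE wV p s1)]

/-- The scan invariant: `curr + settled = N + add`. -/
lemma inv_scanWalk {u v : V} (C : NNReal) (p : T.Walk u v) (s : St V NNReal)
    (h : s.curr + wt wV s.visited = C + s.add) :
    (scanWalk wE wV p s).curr + wt wV (scanWalk wE wV p s).visited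
      = C + (scanWalk wE wV p s).add := by
  induction p generalizing s with
  | nil => exact h
  | cons hadj p ih =>
    rename_i a b c
    rw [scanWalk]
    apply ih
    -- invariant through crossEdge, then visitVtx
    have hcross : (crossEdge wE s(a, b) s).curr + wt wV (crossEdge wE s(a, b) s).visited
        = C + (crossEdge wE s(a, b) s).add := by
      unfold crossEdge
      split
      · rename_i hlt
        simp only
        calc wE s(a, b) + wt wV s.visited
            = (s.curr + (wE s(a, b) - s.curr)) + wt wV s.visited := by
              rw [add_tsub_cancel_of_le (le_of_lt hlt)]
          _ = (s.curr + wt wV s.visited) + (wE s(a, b) - s.curr) := by ring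
          _ = (C + s.add) + (wE s(a, b) - s.curr) := by rw [h]
          _ = C + (s.add + (wE s(a, b) - s.curr)) := by ring
      · exact h
    set s2 := crossEdge wE s(a, b) s
    unfold visitVtx
    split
    · exact hcross
    · rename_i hb
      have hins : wt wV (insert b s2.visited) = wV b + wt wV s2.visited := by
        rw [wt, wt, Finset.sum_insert hb]
      split
      · rename_i hlt
        simp only [hins]
        calc 0 + (wV b + wt wV s2.visited)
            = (s2.curr + (wV b - s2.curr)) + wt wV s2.visited := by
              rw [add_tsub_cancel_of_le (le_of_lt hlt)]; ring
          _ = (s2.curr + wt wV s2.visited) + (wV b - s2.curr) := by ring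
          _ = C + (s2.add + (wV b - s2.curr)) := by rw [hcross]; ring
      · rename_i hge
        simp only [hins]
        calc (s2.curr - wV b) + (wV b + wt wV s2.visited)
            = ((s2.curr - wV b) + wV b) + wt wV s2.visited := by ring
          _ = s2.curr + wt wV s2.visited := by rw [tsub_add_cancel_of_le (not_lt.1 hge)]
          _ = C + s2.add := hcross

lemma scan_curr_le {u v : V} (W : NNReal) (p : T.Walk u v) (s : St V NNReal)
    (hW : ∀ e ∈ p.edges, wE e ≤ W) :
    (scanWalk wE wV p s).curr
      ≤ max W (s.curr - wt wV ((scanWalk wE wV p s).visited \ s.visited)) := by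
  induction p generalizing s with
  | nil => simp [scanWalk, wt]
  | cons hadj p ih =>
    rename_i a b c
    rw [scanWalk]
    set s2 := crossEdge wE s(a, b) s with hs2
    set s1 := visitVtx wV b s2 with hs1
    have hWe : wE s(a, b) ≤ W := hW _ (by simp [SimpleGraph.Walk.edges_cons])
    have h2 : s2.curr ≤ max W s.curr := by
      rw [hs2]; unfold crossEdge; split
      · exact le_max_of_le_left hWe
      · exact le_max_right _ _
    have h1 : s1.curr ≤ max W s.curr - wt wV (s1.visited \ s.visited) := by
      calc s1.curr ≤ s2.curr - wt wV (s1.visited \ s2.visited) := by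
            have := curr_visitVtx_le wV b s2; rw [← hs1] at this; exact this
      _ = s2.curr - wt wV (s1.visited \ s.visited) := by rw [hs2, visited_crossEdge]
      _ ≤ max W s.curr - wt wV (s1.visited \ s.visited) := tsub_le_tsub_right h2 _
    have hF := ih s1 (fun e he => hW e (by simp [SimpleGraph.Walk.edges_cons, he]))
    have h1F : s1.visited ⊆ (scanWalk wE wV p s1).visited := visited_subset_scanWalk wE wV p s1
    have h0v : s.visited ⊆ s1.visited := by
      rw [hs1, visited_visitVtx, hs2, visited_crossEdge]; exact Finset.subset_insert _ _
    have key : s1.curr - wt wV ((scanWalk wE wV p s1).visited \ s1.visited)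
        ≤ max W (s.curr - wt wV ((scanWalk wE wV p s1).visited \ s.visited)) := by
      calc s1.curr - wt wV ((scanWalk wE wV p s1).visited \ s1.visited)
          ≤ (max W s.curr - wt wV (s1.visited \ s.visited))
              - wt wV ((scanWalk wE wV p s1).visited \ s1.visited) :=
            tsub_le_tsub_right h1 _
        _ = max W s.curr - wt wV ((scanWalk wE wV p s1).visited \ s.visited) := by
            rw [tsub_tsub, add_comm, ← wt_sdiff_add wV _ _ _ h0v h1F]
        _ ≤ max (W - wt wV ((scanWalk wE wV p s1).visited \ s.visited))
              (s.curr - wt wV ((scanWalk wE wV p s1).visited \ s.visited)) :=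
            max_tsub_le _ _ _
        _ ≤ _ := max_le_max tsub_le_self le_rfl
    calc (scanWalk wE wV p s1).curr
        ≤ max W (s1.curr - wt wV ((scanWalk wE wV p s1).visited \ s1.visited)) := hF
      _ ≤ max W (max W (s.curr - wt wV ((scanWalk wE wV p s1).visited \ s.visited))) :=
          max_le_max le_rfl key
      _ = max W (s.curr - wt wV ((scanWalk wE wV p s1).visited \ s.visited)) := by
          rw [← max_assoc, max_self]

end Deploy
namespace Deploy

set_option linter.unusedSectionVars false

open SimpleGraph

variable {V : Type*} [DecidableEq V] {T : SimpleGraph V}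
variable (hT : T.IsTree) (wE : Sym2 V → NNReal) (wV : V → NNReal) (vs : V)

lemma treePath_isPath (u v : V) : (treePath hT u v).IsPath :=
  (hT.existsUnique_path u v).choose_spec.1

lemma treePath_unique {u v : V} (p : T.Walk u v) (hp : p.IsPath) : p = treePath hT u v :=
  (hT.existsUnique_path u v).choose_spec.2 p hp

lemma treePath_self (v : V) : treePath hT v v = Walk.nil :=
  (treePath_unique hT Walk.nil Walk.IsPath.nil).symm

lemma treePath_support_subset {u v : V} (w : T.Walk u v) :
    (treePath hT u v).support ⊆ w.support := by
  rw [← treePath_unique hT w.bypass w.bypass_isPath]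
  exact w.support_bypass_subset

lemma treePath_edges_subset {u v : V} (w : T.Walk u v) :
    (treePath hT u v).edges ⊆ w.edges := by
  rw [← treePath_unique hT w.bypass w.bypass_isPath]
  exact w.edges_bypass_subset

/-- The maximum edge weight on the path from the root to `v` (`0` for `v = vs`). -/
noncomputable def mW (v : V) : NNReal := ((treePath hT vs v).edges.map wE).foldr max 0

lemma le_foldr_max (l : List NNReal) (x : NNReal) (hx : x ∈ l) : x ≤ l.foldr max 0 := by
  induction l with
  | nil => simp at hx
  | cons a l ih =>
    rcases List.mem_cons.1 hx with rfl | hx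
    · exact le_max_left _ _
    · exact le_trans (ih hx) (le_max_right _ _)

lemma foldr_max_le (l : List NNReal) (B : NNReal) (h : ∀ x ∈ l, x ≤ B) :
    l.foldr max 0 ≤ B := by
  induction l with
  | nil => simp
  | cons a l ih =>
    exact max_le (h a (List.mem_cons_self)) (ih fun x hx => h x (List.mem_cons_of_mem _ hx))

lemma mW_vs : mW hT wE vs vs = 0 := by
  rw [mW, treePath_self]
  simp

lemma mW_le_of_mem_support {w v : V} (hv : v ∈ (treePath hT vs w).support) :
    mW hT wE vs v ≤ mW hT wE vs w := by
  have hsub : (treePath hT vs v).edges ⊆ (treePath hT vs w).edges := by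
    rw [← treePath_unique hT ((treePath hT vs w).takeUntil v hv)
      ((treePath_isPath hT vs w).takeUntil hv)]
    exact Walk.edges_takeUntil_subset _ hv
  apply foldr_max_le
  intro x hx
  obtain ⟨e, he, rfl⟩ := List.mem_map.1 hx
  exact le_foldr_max _ _ (List.mem_map_of_mem (hsub he))

lemma treePath_edges_ne_nil {v : V} (h : v ≠ vs) : (treePath hT vs v).edges ≠ [] := by
  intro hnil
  have : (treePath hT vs v).length = 0 := by
    rw [← Walk.length_edges, hnil]; rfl
  exact h (Walk.eq_of_length_eq_zero this).symm

lemma argmax_treePath {v : V} (h : v ≠ vs) :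
    (treePath hT vs v).edges.argmax wE = some (domEdge hT wE vs v) := by
  rcases ho : (treePath hT vs v).edges.argmax wE with _ | m
  · exact absurd (List.argmax_eq_none.1 ho) (treePath_edges_ne_nil hT vs h)
  · rw [domEdge, ho]; rfl

lemma domEdge_mem {v : V} (h : v ≠ vs) :
    domEdge hT wE vs v ∈ (treePath hT vs v).edges :=
  List.argmax_mem (argmax_treePath hT wE vs h)

lemma wE_domEdge {v : V} (h : v ≠ vs) : wE (domEdge hT wE vs v) = mW hT wE vs v := by
  apply le_antisymm
  · exact le_foldr_max _ _ (List.mem_map_of_mem (domEdge_mem hT wE vs h))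
  · apply foldr_max_le
    intro x hx
    obtain ⟨e, he, rfl⟩ := List.mem_map.1 hx
    exact List.le_of_mem_argmax he (argmax_treePath hT wE vs h)

lemma key_tail {x b : V} (p : T.Walk x b) (hp : p.IsPath) (e : Sym2 V)
    (he : e ∈ p.edges) (v : V) (hv : v ∈ p.support.drop (p.edges.idxOf e + 1)) :
    ∃ w : T.Walk x v, w.IsPath ∧ e ∈ w.edges ∧ w.edges ⊆ p.edges ∧ w.support ⊆ p.support := by
  induction p with
  | nil => simp at he
  | cons hadj p ih =>
    rename_i a c d
    rw [Walk.edges_cons] at he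
    by_cases hc : e = s(a, c)
    · subst hc
      rw [Walk.edges_cons, List.idxOf_cons_self, Walk.support_cons,
        List.drop_succ_cons, List.drop_zero] at hv
      refine ⟨Walk.cons hadj (p.takeUntil v hv), ?_, ?_, ?_, ?_⟩
      · rw [Walk.cons_isPath_iff]
        refine ⟨((Walk.cons_isPath_iff hadj p).1 hp).1.takeUntil hv, fun hmem => ?_⟩
        exact ((Walk.cons_isPath_iff hadj p).1 hp).2 (Walk.support_takeUntil_subset _ hv hmem)
      · rw [Walk.edges_cons]; exact List.mem_cons_self
      · rw [Walk.edges_cons, Walk.edges_cons]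
        intro e' he'
        rcases List.mem_cons.1 he' with rfl | he'
        · exact List.mem_cons_self
        · exact List.mem_cons_of_mem _ (Walk.edges_takeUntil_subset _ hv he')
      · rw [Walk.support_cons, Walk.support_cons]
        intro y hy
        rcases List.mem_cons.1 hy with rfl | hy
        · exact List.mem_cons_self
        · exact List.mem_cons_of_mem _ (Walk.support_takeUntil_subset _ hv hy)
    · have he' : e ∈ p.edges := by
        rcases List.mem_cons.1 he with h1 | h1
        · exact absurd h1 hc
        · exact h1
      have hv' : v ∈ p.support.drop (p.edges.idxOf e + 1) := by
        rw [Walk.edges_cons, List.idxOf_cons_ne _ (fun h => hc h.symm), Walk.support_cons] at hv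
        rwa [Nat.succ_eq_add_one, List.drop_succ_cons] at hv
      obtain ⟨w', hw'p, hw'e, hw'sub, hw'sup⟩ :=
        ih ((Walk.cons_isPath_iff hadj p).1 hp).1 he' hv'
      refine ⟨Walk.cons hadj w', ?_, ?_, ?_, ?_⟩
      · rw [Walk.cons_isPath_iff]
        exact ⟨hw'p, fun hmem => ((Walk.cons_isPath_iff hadj p).1 hp).2 (hw'sup hmem)⟩
      · rw [Walk.edges_cons]; exact List.mem_cons_of_mem _ hw'e
      · rw [Walk.edges_cons, Walk.edges_cons]
        intro e' he''
        rcases List.mem_cons.1 he'' with rfl | he''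
        · exact List.mem_cons_self
        · exact List.mem_cons_of_mem _ (hw'sub he'')
      · rw [Walk.support_cons, Walk.support_cons]
        intro y hy
        rcases List.mem_cons.1 hy with rfl | hy
        · exact List.mem_cons_self
        · exact List.mem_cons_of_mem _ (hw'sup hy)

lemma tailVerts_spec {b v : V} (hb : b ≠ vs) (hv : v ∈ tailVerts hT wE vs b) :
    mW hT wE vs v = wE (domEdge hT wE vs b) ∧ v ≠ vs
      ∧ v ∈ (treePath hT vs b).support := by
  have hp : (treePath hT vs b).IsPath := treePath_isPath hT vs b
  have he : domEdge hT wE vs b ∈ (treePath hT vs b).edges := domEdge_mem hT wE vs hb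
  rw [tailVerts, domIdx] at hv
  have hvsup : v ∈ (treePath hT vs b).support := List.drop_subset _ _ hv
  obtain ⟨w, hwp, hwe, hwsub, _⟩ := key_tail (treePath hT vs b) hp _ he v hv
  have hwv : w = treePath hT vs v := treePath_unique hT w hwp
  have hvne : v ≠ vs := by
    intro hveq
    have hnodup := hp.support_nodup
    rw [Walk.support_eq_cons] at hnodup
    have hvtail : v ∈ (treePath hT vs b).support.tail := by
      have h' := hv
      rw [Walk.support_eq_cons, List.drop_succ_cons] at h'
      exact List.drop_subset _ _ h'
    rw [hveq] at hvtail
    exact (List.nodup_cons.1 hnodup).1 hvtail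
  refine ⟨le_antisymm ?_ ?_, hvne, hvsup⟩
  · apply foldr_max_le
    intro x hx
    obtain ⟨e', he', rfl⟩ := List.mem_map.1 hx
    rw [← hwv] at he'
    exact List.le_of_mem_argmax (hwsub he') (argmax_treePath hT wE vs hb)
  · rw [mW]
    apply le_foldr_max
    apply List.mem_map_of_mem
    rw [← hwv]
    exact hwe

lemma csVerts_spec {e : Sym2 V} (he : e ∈ DomEdges hT wE vs) {v : V}
    (hv : v ∈ csVerts hT wE vs e) : mW hT wE vs v = wE e ∧ v ≠ vs := by
  obtain ⟨b, hbleaf, hbe, hvtail⟩ := hv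
  obtain ⟨h1, h2⟩ := tailVerts_spec hT wE vs hbleaf.2 hvtail
  rw [← hbe]
  exact ⟨h1, h2.1⟩

end Deploy
namespace Deploy

set_option linter.unusedSectionVars false

open SimpleGraph

variable {V : Type*} [DecidableEq V] {T : SimpleGraph V}
variable (hT : T.IsTree) (wE : Sym2 V → NNReal) (wV : V → NNReal) (vs : V)

/-- Out-and-back walk from the root to `v`. -/
noncomputable def roundWalk (v : V) : T.Walk vs vs :=
  (treePath hT vs v).append (treePath hT vs v).reverse

/-- Concatenation of out-and-back walks to all vertices in a list. -/
noncomputable def bigWalk : List V → T.Walk vs vs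
  | [] => Walk.nil
  | v :: l => (roundWalk hT vs v).append (bigWalk l)

/-- The set of vertices on the root-paths to the vertices of `l` (plus the root). -/
noncomputable def SS : List V → Finset V
  | [] => {vs}
  | v :: l => (treePath hT vs v).support.toFinset ∪ SS l

lemma mem_SS {l : List V} {u : V} :
    u ∈ SS hT vs l ↔ u = vs ∨ ∃ x ∈ l, u ∈ (treePath hT vs x).support := by
  induction l with
  | nil => simp [SS]
  | cons v l ih =>
    simp only [SS, Finset.mem_union, List.mem_toFinset, ih, List.mem_cons]
    constructor
    · rintro (h | h | ⟨x, hx, hu⟩)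
      · exact Or.inr ⟨v, Or.inl rfl, h⟩
      · exact Or.inl h
      · exact Or.inr ⟨x, Or.inr hx, hu⟩
    · rintro (h | ⟨x, (rfl | hx), hu⟩)
      · exact Or.inr (Or.inl h)
      · exact Or.inl hu
      · exact Or.inr (Or.inr ⟨x, hx, hu⟩)

lemma vs_mem_SS (l : List V) : vs ∈ SS hT vs l := (mem_SS hT vs).2 (Or.inl rfl)

lemma support_roundWalk (v : V) {u : V} :
    u ∈ (roundWalk hT vs v).support ↔ u ∈ (treePath hT vs v).support := by
  rw [roundWalk, Walk.support_append]
  constructor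
  · intro h
    rcases List.mem_append.1 h with h | h
    · exact h
    · have := List.tail_subset _ h
      rw [Walk.support_reverse] at this
      exact List.mem_reverse.1 this
  · intro h
    exact List.mem_append.2 (Or.inl h)

lemma edges_roundWalk_le (v : V) {e : Sym2 V} (he : e ∈ (roundWalk hT vs v).edges) :
    wE e ≤ mW hT wE vs v := by
  have he' : e ∈ (treePath hT vs v).edges := by
    rw [roundWalk, Walk.edges_append] at he
    rcases List.mem_append.1 he with h | h
    · exact h
    · rw [Walk.edges_reverse] at h
      exact List.mem_reverse.1 h
  exact le_foldr_max _ _ (List.mem_map_of_mem he')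

lemma mem_support_bigWalk {l : List V} {v : V} (hv : v ∈ l) :
    v ∈ (bigWalk hT vs l).support := by
  induction l with
  | nil => simp at hv
  | cons x l ih =>
    rw [bigWalk, Walk.support_append]
    rcases List.mem_cons.1 hv with rfl | hv
    · exact List.mem_append.2 (Or.inl ((support_roundWalk hT vs v).2
        (Walk.end_mem_support _)))
    · have := ih hv
      rw [Walk.support_eq_cons (bigWalk hT vs l)] at this
      rcases List.mem_cons.1 this with rfl | h
      · exact List.mem_append.2 (Or.inl (Walk.start_mem_support _))
      · exact List.mem_append.2 (Or.inr h)

/-- initial state of the scan -/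
noncomputable def initSt [Fintype V] : St V NNReal := visitVtx wV vs ⟨∅, ∑ v, wV v, 0⟩

lemma initSt_visited [Fintype V] : (initSt wV vs).visited = {vs} := by
  rw [initSt, visited_visitVtx]; simp

lemma initSt_curr [Fintype V] : (initSt wV vs).curr ≤ (∑ v, wV v) - wV vs := by
  rw [initSt]
  unfold visitVtx
  simp only [Finset.notMem_empty, if_false]
  split
  · exact zero_le
  · exact le_rfl

lemma initSt_inv [Fintype V] :
    (initSt wV vs).curr + wt wV (initSt wV vs).visited = (∑ v, wV v) + (initSt wV vs).add := by
  have hle : wV vs ≤ ∑ v, wV v :=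
    Finset.single_le_sum (fun i _ => zero_le) (Finset.mem_univ vs)
  rw [initSt]
  unfold visitVtx
  simp only [Finset.notMem_empty, if_false]
  split
  · rename_i hlt
    exact absurd hlt (not_lt.2 hle)
  · simp only [wt]
    rw [Finset.sum_insert (Finset.notMem_empty vs), Finset.sum_empty, add_zero, add_zero,
      tsub_add_cancel_of_le hle]

lemma visited_scan_init [Fintype V] (q : T.Walk vs vs) (hq : IsCovering q) :
    (scanWalk wE wV q (initSt wV vs)).visited = Finset.univ := by
  rw [visited_scanWalk, initSt_visited]
  apply Finset.eq_univ_iff_forall.2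
  intro x
  have hx := hq x
  rw [Walk.support_eq_cons q] at hx
  rcases List.mem_cons.1 hx with rfl | hx
  · exact Finset.mem_union_left _ (Finset.mem_singleton_self x)
  · exact Finset.mem_union_right _ (List.mem_toFinset.2 hx)

lemma agentCount_eq_curr [Fintype V] (q : T.Walk vs vs) (hq : IsCovering q) :
    agentCount wE wV q = (∑ v, wV v) + (scanWalk wE wV q (initSt wV vs)).curr := by
  have hinv := inv_scanWalk wE wV (∑ v, wV v) q (initSt wV vs) (initSt_inv wV vs)
  rw [visited_scan_init wE wV vs q hq] at hinv
  have huniv : wt wV (Finset.univ : Finset V) = ∑ v, wV v := rfl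
  rw [huniv] at hinv
  have : (scanWalk wE wV q (initSt wV vs)).add = (scanWalk wE wV q (initSt wV vs)).curr := by
    have h2 : (∑ v, wV v) + (scanWalk wE wV q (initSt wV vs)).curr
        = (∑ v, wV v) + (scanWalk wE wV q (initSt wV vs)).add := by
      rw [← hinv]; ring
    exact (add_left_cancel h2).symm
  have hdef : agentCount wE wV q = (∑ v, wV v) + (scanWalk wE wV q (initSt wV vs)).add := rfl
  rw [hdef, this]

lemma sup_range_shift (n : ℕ) (f : ℕ → NNReal) :
    (Finset.range (n + 1)).sup f = max (f 0) ((Finset.range n).sup fun i => f (i + 1)) := by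
  apply le_antisymm
  · apply Finset.sup_le
    intro i hi
    match i with
    | 0 => exact le_max_left _ _
    | j + 1 =>
      refine le_trans ?_ (le_max_right _ _)
      exact Finset.le_sup (f := fun i => f (i + 1))
        (Finset.mem_range.2 (Nat.lt_of_succ_lt_succ (Finset.mem_range.1 hi)))
  · apply max_le
    · exact Finset.le_sup (Finset.mem_range.2 (Nat.succ_pos n))
    · apply Finset.sup_le
      intro i hi
      exact Finset.le_sup (Finset.mem_range.2 (Nat.succ_lt_succ (Finset.mem_range.1 hi)))

lemma UBrec (l : List V) (s : St V NNReal) (hvs : vs ∈ s.visited) :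
    (scanWalk wE wV (bigWalk hT vs l) s).curr
      ≤ max (s.curr - wt wV ((scanWalk wE wV (bigWalk hT vs l) s).visited \ s.visited))
        ((Finset.range l.length).sup fun i =>
          mW hT wE vs (l.getD i vs) -
            wt wV ((scanWalk wE wV (bigWalk hT vs l) s).visited \
              (s.visited ∪ SS hT vs (l.take (i + 1))))) := by
  induction l generalizing s with
  | nil =>
    simp only [bigWalk, scanWalk]
    simp [wt]
  | cons v l ih =>
    have hsplit : scanWalk wE wV (bigWalk hT vs (v :: l)) s
        = scanWalk wE wV (bigWalk hT vs l) (scanWalk wE wV (roundWalk hT vs v) s) := by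
      rw [bigWalk, scanWalk_append]
    rw [hsplit]
    set s1 := scanWalk wE wV (roundWalk hT vs v) s with hs1
    set F := scanWalk wE wV (bigWalk hT vs l) s1 with hF
    have hvs1 : vs ∈ s1.visited := (visited_subset_scanWalk wE wV _ s) hvs
    have hs1vis : s1.visited = s.visited ∪ (treePath hT vs v).support.toFinset := by
      rw [hs1, visited_scanWalk]
      ext x
      simp only [Finset.mem_union, List.mem_toFinset]
      constructor
      · rintro (h | h)
        · exact Or.inl h
        · exact Or.inr ((support_roundWalk hT vs v).1 (List.tail_subset _ h))
      · rintro (h | h)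
        · exact Or.inl h
        · rcases List.mem_cons.1 (by
              rw [← Walk.support_eq_cons (roundWalk hT vs v)]
              exact (support_roundWalk hT vs v).2 h) with heq | hm
          · rw [heq]; exact Or.inl hvs
          · exact Or.inr hm
    have hsv1 : s.visited ⊆ s1.visited := visited_subset_scanWalk wE wV _ s
    have hs1F : s1.visited ⊆ F.visited := visited_subset_scanWalk wE wV _ s1
    have hsF : s.visited ⊆ F.visited := hsv1.trans hs1F
    -- round bound
    have hround : s1.curr ≤ max (mW hT wE vs v) (s.curr - wt wV (s1.visited \ s.visited)) :=
      scan_curr_le wE wV _ _ s (fun e he => edges_roundWalk_le hT wE vs v he)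
    have hIH := ih s1 hvs1
    -- the i = 0 target set
    have hset0 : s.visited ∪ SS hT vs ((v :: l).take 1) = s1.visited := by
      rw [hs1vis]
      ext x
      simp only [List.take_succ_cons, List.take_zero, SS, Finset.mem_union, List.mem_toFinset,
        Finset.mem_singleton]
      constructor
      · rintro (h | h | rfl)
        · exact Or.inl h
        · exact Or.inr h
        · exact Or.inl hvs
      · rintro (h | h)
        · exact Or.inl h
        · exact Or.inr (Or.inl h)
    have hsetS : ∀ i, s1.visited ∪ SS hT vs (l.take (i + 1))
        = s.visited ∪ SS hT vs ((v :: l).take (i + 2)) := by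
      intro i
      rw [hs1vis]
      simp only [List.take_succ_cons, SS]
      ext x
      simp only [Finset.mem_union, List.mem_toFinset]
      tauto
    -- key step: bound s1-based quantities
    have hkey : s1.curr - wt wV (F.visited \ s1.visited)
        ≤ max (mW hT wE vs v -
            wt wV (F.visited \ (s.visited ∪ SS hT vs ((v :: l).take 1))))
          (s.curr - wt wV (F.visited \ s.visited)) := by
      calc s1.curr - wt wV (F.visited \ s1.visited)
          ≤ max (mW hT wE vs v) (s.curr - wt wV (s1.visited \ s.visited))
              - wt wV (F.visited \ s1.visited) := tsub_le_tsub_right hround _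
        _ ≤ max (mW hT wE vs v - wt wV (F.visited \ s1.visited))
              ((s.curr - wt wV (s1.visited \ s.visited)) - wt wV (F.visited \ s1.visited)) :=
            max_tsub_le _ _ _
        _ = max (mW hT wE vs v - wt wV (F.visited \ s1.visited))
              (s.curr - wt wV (F.visited \ s.visited)) := by
            rw [tsub_tsub, add_comm, ← wt_sdiff_add wV _ _ _ hsv1 hs1F]
        _ = _ := by rw [hset0]; try rfl
    calc F.curr ≤ max (s1.curr - wt wV (F.visited \ s1.visited))
          ((Finset.range l.length).sup fun i =>
            mW hT wE vs (l.getD i vs) -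
              wt wV (F.visited \ (s1.visited ∪ SS hT vs (l.take (i + 1))))) := hIH
      _ ≤ _ := by
          apply max_le
          · refine hkey.trans (max_le ?_ ?_)
            · refine le_trans ?_ (le_max_right _ _)
              have h0 : (0 : ℕ) ∈ Finset.range (v :: l).length := by
                simp [List.length_cons]
              have hle0 := Finset.le_sup (f := fun j =>
                mW hT wE vs ((v :: l).getD j vs) -
                  wt wV (F.visited \ (s.visited ∪ SS hT vs ((v :: l).take (j + 1))))) h0
              simp only [List.getD_cons_zero] at hle0
              exact hle0
            · exact le_max_left _ _
          · refine le_trans ?_ (le_max_right _ _)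
            apply Finset.sup_le
            intro i hi
            have hmem : i + 1 ∈ Finset.range (v :: l).length := by
              simp only [Finset.mem_range, List.length_cons] at hi ⊢
              omega
            have hle := Finset.le_sup (f := fun j =>
              mW hT wE vs ((v :: l).getD j vs) -
                wt wV (F.visited \ (s.visited ∪ SS hT vs ((v :: l).take (j + 1))))) hmem
            simp only [List.getD_cons_succ, List.take_succ_cons] at hle
            rw [hsetS i]
            simp only [List.take_succ_cons]
            exact hle

end Deploy
namespace Deploy

set_option linter.unusedSectionVars false
set_option maxHeartbeats 800000

open SimpleGraph

variable {V : Type*} [DecidableEq V] {T : SimpleGraph V}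
variable (hT : T.IsTree) (wE : Sym2 V → NNReal) (wV : V → NNReal) (vs : V)

/-- Split a walk at the last crossing of any edge from `E`. -/
lemma exists_lastSplit {x y : V} (q : T.Walk x y) (E : List (Sym2 V))
    (h : ∃ e ∈ E, e ∈ q.edges) :
    ∃ (a b : V) (hab : T.Adj a b) (q₁ : T.Walk x a) (q₂ : T.Walk b y),
      q = q₁.append (Walk.cons hab q₂) ∧ s(a, b) ∈ E ∧ ∀ e ∈ E, e ∉ q₂.edges := by
  induction q with
  | nil =>
    obtain ⟨e, _, he⟩ := h
    simp at he
  | cons hadj p ih =>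
    rename_i u c d
    by_cases hp : ∃ e ∈ E, e ∈ p.edges
    · obtain ⟨a, b, hab, q₁, q₂, hdec, hmem, hnot⟩ := ih hp
      refine ⟨a, b, hab, Walk.cons hadj q₁, q₂, ?_, hmem, hnot⟩
      rw [Walk.cons_append, hdec]
    · obtain ⟨e, heE, he⟩ := h
      rw [Walk.edges_cons] at he
      rcases List.mem_cons.1 he with rfl | he'
      · refine ⟨u, c, hadj, Walk.nil, p, ?_, heE, fun e' he'E he'p => hp ⟨e', he'E, he'p⟩⟩
        rw [Walk.nil_append]
      · exact absurd ⟨e, heE, he'⟩ hp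

lemma treePath_edges_mem_walk {x : V} {u y : V} (q : T.Walk u y) (hx : x ∈ q.support)
    {e : Sym2 V} (he : e ∈ (treePath hT u x).edges) : e ∈ q.edges :=
  Walk.edges_takeUntil_subset q hx (treePath_edges_subset hT (q.takeUntil x hx) he)

lemma LBmain [Fintype V] (q : T.Walk vs vs) (hq : IsCovering q) (A : List V) (W : NNReal)
    (hA : A ≠ []) (hAv : ∀ x ∈ A, x ≠ vs) (hAW : ∀ x ∈ A, W ≤ mW hT wE vs x) :
    W ≤ (scanWalk wE wV q (initSt wV vs)).curr + wt wV (Finset.univ \ SS hT vs A) := by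
  set E : List (Sym2 V) := A.map (domEdge hT wE vs) with hE
  have hEq : ∀ e ∈ E, e ∈ q.edges := by
    intro e he
    obtain ⟨x, hx, rfl⟩ := List.mem_map.1 he
    exact treePath_edges_mem_walk hT q (hq x) (domEdge_mem hT wE vs (hAv x hx))
  have hex : ∃ e ∈ E, e ∈ q.edges := by
    obtain ⟨x, hx⟩ := List.exists_mem_of_ne_nil A hA
    exact ⟨domEdge hT wE vs x, List.mem_map_of_mem hx, hEq _ (List.mem_map_of_mem hx)⟩
  obtain ⟨a, b, hab, q₁, q₂, hdec, hmemE, hnot⟩ := exists_lastSplit q E hex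
  set s0 := initSt wV vs with hs0
  set s1 := scanWalk wE wV q₁ s0 with hs1
  set s2 := crossEdge wE s(a, b) s1 with hs2
  set s3 := visitVtx wV b s2 with hs3
  have hscan : scanWalk wE wV q s0 = scanWalk wE wV q₂ s3 := by
    rw [hdec, scanWalk_append]
    rfl
  set F := scanWalk wE wV q₂ s3 with hFd
  -- curr after crossing is at least the edge weight
  have hcross : wE s(a, b) ≤ s2.curr := wE_le_crossEdge wE _ s1
  -- W ≤ wE s(a,b)
  have hWe : W ≤ wE s(a, b) := by
    obtain ⟨x, hx, hxe⟩ := List.mem_map.1 hmemE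
    rw [← hxe, wE_domEdge hT wE vs (hAv x hx)]
    exact hAW x hx
  -- visited monotonicity and curr decay
  have h23v : s2.visited ⊆ s3.visited := (grow_visitVtx wV b s2).1
  have h3Fv : s3.visited ⊆ F.visited := visited_subset_scanWalk wE wV q₂ s3
  have hgrow : s2.curr ≤ F.curr + wt wV (F.visited \ s2.visited) := by
    calc s2.curr ≤ s3.curr + wt wV (s3.visited \ s2.visited) := (grow_visitVtx wV b s2).2
    _ ≤ (F.curr + wt wV (F.visited \ s3.visited)) + wt wV (s3.visited \ s2.visited) := by
        gcongr
        exact grow_scanWalk wE wV q₂ s3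
    _ = F.curr + wt wV (F.visited \ s2.visited) := by
        rw [add_assoc, ← wt_sdiff_add wV _ _ _ h23v h3Fv]
  -- SS A is visited before the final crossing
  have hSS : SS hT vs A ⊆ s2.visited := by
    intro u hu
    have hs2v : s2.visited = s1.visited := by rw [hs2, visited_crossEdge]
    rw [hs2v, hs1, visited_scanWalk, initSt_visited]
    have hmem_of_sup : u ∈ q₁.support →
        u ∈ ({vs} : Finset V) ∪ q₁.support.tail.toFinset := by
      intro hus
      rw [Walk.support_eq_cons q₁] at hus
      rcases List.mem_cons.1 hus with rfl | h
      · exact Finset.mem_union_left _ (Finset.mem_singleton_self u)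
      · exact Finset.mem_union_right _ (List.mem_toFinset.2 h)
    rcases (mem_SS hT vs).1 hu with rfl | ⟨x, hxA, husup⟩
    · exact hmem_of_sup (Walk.start_mem_support q₁)
    · apply hmem_of_sup
      by_contra hu1
      -- then x is not on q₁ either
      have hx1 : x ∉ q₁.support := by
        intro hx1
        exact hu1 (Walk.support_takeUntil_subset q₁ hx1
          (treePath_support_subset hT (q₁.takeUntil x hx1) husup))
      -- so x is on q₂
      have hxq : x ∈ q.support := hq x
      have hx2 : x ∈ q₂.support := by
        rw [hdec, Walk.support_append] at hxq
        rcases List.mem_append.1 hxq with h | h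
        · exact absurd h hx1
        · rw [Walk.support_cons, List.tail_cons] at h
          exact h
      -- the walk from x back to vs in q₂ must cross the dominating edge of x
      have hed : domEdge hT wE vs x ∈ q₂.edges := by
        have hrev : domEdge hT wE vs x ∈ ((q₂.dropUntil x hx2).reverse).edges := by
          apply treePath_edges_subset hT ((q₂.dropUntil x hx2).reverse)
          exact domEdge_mem hT wE vs (hAv x hxA)
        rw [Walk.edges_reverse, List.mem_reverse] at hrev
        exact Walk.edges_dropUntil_subset q₂ hx2 hrev
      exact hnot _ (List.mem_map_of_mem hxA) hed
  -- assemble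
  have hsub : F.visited \ s2.visited ⊆ Finset.univ \ SS hT vs A := by
    intro z hz
    rw [Finset.mem_sdiff] at hz ⊢
    exact ⟨Finset.mem_univ z, fun hzS => hz.2 (hSS hzS)⟩
  calc W ≤ wE s(a, b) := hWe
  _ ≤ s2.curr := hcross
  _ ≤ F.curr + wt wV (F.visited \ s2.visited) := hgrow
  _ ≤ F.curr + wt wV (Finset.univ \ SS hT vs A) := by gcongr; exact wt_mono wV hsub
  _ = _ := by rw [hscan]

end Deploy
namespace Deploy

set_option linter.unusedSectionVars false
set_option maxHeartbeats 800000

open SimpleGraph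

variable {V : Type*} [DecidableEq V] {T : SimpleGraph V}
variable (hT : T.IsTree) (wE : Sym2 V → NNReal) (wV : V → NNReal) (vs : V)

/-- All vertices, sorted by decreasing `mW`. -/
noncomputable def sortedL [Fintype V] : List V :=
  @List.insertionSort V (fun a b => mW hT wE vs b ≤ mW hT wE vs a)
    (Classical.decRel _) Finset.univ.toList

lemma mem_sortedL [Fintype V] (x : V) : x ∈ sortedL hT wE vs := by
  rw [sortedL]
  rw [(List.perm_insertionSort _ _).mem_iff]
  exact Finset.mem_toList.2 (Finset.mem_univ x)

lemma sortedL_sorted [Fintype V] :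
    List.Pairwise (fun a b => mW hT wE vs b ≤ mW hT wE vs a) (sortedL hT wE vs) := by
  haveI : Std.Total (fun a b => mW hT wE vs b ≤ mW hT wE vs a) := ⟨fun a b => le_total _ _⟩
  haveI : IsTrans V (fun a b => mW hT wE vs b ≤ mW hT wE vs a) :=
    ⟨fun a b c h1 h2 => le_trans h2 h1⟩
  exact @List.pairwise_insertionSort V _ (Classical.decRel _) _ _ _

/-- In a list sorted by decreasing key, a monotone (downward-closed) predicate holds
exactly on the first `countP` positions. -/
lemma sorted_countP_iff (key : V → NNReal) (P : V → Bool)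
    (hmono : ∀ a b : V, key b ≤ key a → P b = true → P a = true) :
    ∀ (L : List V), List.Pairwise (fun a b => key b ≤ key a) L →
      ∀ i (h : i < L.length), (P L[i] = true ↔ i < L.countP P) := by
  intro L
  induction L with
  | nil => intro _ i h; simp at h
  | cons a l ih =>
    intro hs i h
    obtain ⟨ha, hl⟩ := List.pairwise_cons.1 hs
    rw [List.countP_cons]
    match i with
    | 0 =>
      simp only [List.getElem_cons_zero]
      by_cases hPa : P a = true
      · simp [hPa]
      · have hz : l.countP P = 0 := List.countP_eq_zero.2 fun b hb hPb =>
          hPa (hmono a b (ha b hb) hPb)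
        simp [hPa, hz]
    | i + 1 =>
      simp only [List.getElem_cons_succ]
      have hih := ih hl i (by simpa using Nat.lt_of_succ_lt_succ h)
      by_cases hPa : P a = true
      · simp only [hPa, if_true]
        rw [hih]
        omega
      · have hz : l.countP P = 0 := List.countP_eq_zero.2 fun b hb hPb =>
          hPa (hmono a b (ha b hb) hPb)
        have hidx : i < l.length := by simpa using Nat.lt_of_succ_lt_succ h
        have hli : ¬ P (l[i]'hidx) = true := by
          intro hc
          have := hih.1 hc
          omega
        simp [hli, hPa, hz]

lemma bigWalk_covering [Fintype V] : IsCovering (bigWalk hT vs (sortedL hT wE vs)) :=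
  fun v => mem_support_bigWalk hT vs (mem_sortedL hT wE vs v)

lemma wt_univ_sdiff_singleton [Fintype V] :
    wt wV (Finset.univ \ {vs}) = (∑ v, wV v) - wV vs := by
  have hsub : ({vs} : Finset V) ⊆ Finset.univ := Finset.subset_univ _
  have : wt wV (Finset.univ \ {vs}) + wt wV {vs} = wt wV Finset.univ := by
    rw [wt, wt, wt, Finset.sum_sdiff hsub]
  have hwt : wt wV ({vs} : Finset V) = wV vs := by rw [wt, Finset.sum_singleton]
  rw [hwt] at this
  rw [eq_tsub_of_add_eq this]
  rfl

lemma sorted_take_ge [Fintype V] {i : ℕ} (hi : i < (sortedL hT wE vs).length)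
    {x : V} (hx : x ∈ (sortedL hT wE vs).take (i + 1)) :
    mW hT wE vs (sortedL hT wE vs)[i] ≤ mW hT wE vs x := by
  obtain ⟨j, hj, rfl⟩ := List.mem_take_iff_getElem.1 hx
  have hj' : j < (sortedL hT wE vs).length := lt_of_lt_of_le hj (min_le_right _ _)
  rcases Nat.lt_or_ge j i with hlt | hge
  · exact (sortedL_sorted hT wE vs).rel_get_of_lt (a := ⟨j, hj'⟩) (b := ⟨i, hi⟩) hlt
  · have : j = i := by
      have := lt_of_lt_of_le hj (min_le_left _ _)
      omega
    subst this
    exact le_rfl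

/-- The canonical walk has minimal agent count among covering closed walks. -/
lemma bigWalk_minimal [Fintype V] (q : T.Walk vs vs) (hq : IsCovering q) :
    agentCount wE wV (bigWalk hT vs (sortedL hT wE vs)) ≤ agentCount wE wV q := by
  set L := sortedL hT wE vs with hL
  have hcov : IsCovering (bigWalk hT vs L) := bigWalk_covering hT wE vs
  rw [agentCount_eq_curr wE wV vs _ hcov, agentCount_eq_curr wE wV vs q hq]
  apply add_le_add_right
  have hvs0 : vs ∈ (initSt wV vs).visited := by
    rw [initSt_visited]; exact Finset.mem_singleton_self vs
  have hub := UBrec hT wE wV vs L (initSt wV vs) hvs0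
  have hvisP : (scanWalk wE wV (bigWalk hT vs L) (initSt wV vs)).visited = Finset.univ :=
    visited_scan_init wE wV vs _ hcov
  rw [hvisP, initSt_visited] at hub
  refine hub.trans (max_le ?_ ?_)
  · -- the initial-state term is zero
    have h1 : (initSt wV vs).curr ≤ (∑ v, wV v) - wV vs := initSt_curr wV vs
    have h2 : wt wV (Finset.univ \ ({vs} : Finset V)) = (∑ v, wV v) - wV vs :=
      wt_univ_sdiff_singleton wV vs
    calc (initSt wV vs).curr - wt wV (Finset.univ \ ({vs} : Finset V))
        ≤ ((∑ v, wV v) - wV vs) - ((∑ v, wV v) - wV vs) := by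
          rw [h2]; exact tsub_le_tsub_right h1 _
      _ = 0 := tsub_self _
      _ ≤ _ := zero_le
  · apply Finset.sup_le
    intro i hi
    rw [Finset.mem_range] at hi
    have hgetD : L.getD i vs = L[i] := List.getD_eq_getElem L vs hi
    set W := mW hT wE vs L[i] with hW
    rw [hgetD]
    -- simplify the subtracted set
    have hsets : ({vs} : Finset V) ∪ SS hT vs (L.take (i + 1)) = SS hT vs (L.take (i + 1)) := by
      apply Finset.union_eq_right.2
      intro z hz
      rw [Finset.mem_singleton] at hz
      rw [hz]
      exact vs_mem_SS hT vs _
    rw [hsets]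
    by_cases h0 : W = 0
    · rw [← hW, h0]
      simp
    · have hlb := LBmain hT wE wV vs q hq (L.take (i + 1)) W ?_ ?_ ?_
      · rw [← hW]
        exact tsub_le_iff_right.2 hlb
      · -- take nonempty
        intro hnil
        have := congrArg List.length hnil
        rw [List.length_take] at this
        simp only [List.length_nil] at this
        omega
      · intro x hx hxvs
        have hge : W ≤ mW hT wE vs x := sorted_take_ge hT wE vs hi hx
        rw [hxvs, mW_vs] at hge
        exact h0 (le_zero_iff.1 hge)
      · intro x hx
        exact sorted_take_ge hT wE vs hi hx

end Deploy
namespace Deploy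

set_option linter.unusedSectionVars false
set_option maxHeartbeats 800000

open SimpleGraph

variable {V : Type*} [DecidableEq V] {T : SimpleGraph V}
variable (hT : T.IsTree) (wE : Sym2 V → NNReal) (wV : V → NNReal) (vs : V)

/-- Length (in edges) of the out-and-back round trip to `v`. -/
noncomputable def lenRound (v : V) : ℕ := 2 * (treePath hT vs v).length

/-- Starting support-index of the rounds after the rounds for the list `l`. -/
noncomputable def startIdx (l : List V) : ℕ := (l.map (lenRound hT vs)).sum

lemma length_support_roundWalk (v : V) :
    (roundWalk hT vs v).support.length = lenRound hT vs v + 1 := by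
  rw [Walk.length_support, roundWalk, Walk.length_append, Walk.length_reverse, lenRound]
  ring

lemma support_bigWalk_cons (v : V) (l : List V) :
    (bigWalk hT vs (v :: l)).support
      = (roundWalk hT vs v).support ++ (bigWalk hT vs l).support.tail := by
  rw [bigWalk, Walk.support_append]

lemma startIdx_cons (v : V) (l : List V) :
    startIdx hT vs (v :: l) = lenRound hT vs v + startIdx hT vs l := by
  rw [startIdx, List.map_cons, List.sum_cons, startIdx]

lemma startIdx_take_succ (l : List V) (t : ℕ) (ht : t < l.length) :
    startIdx hT vs (l.take (t + 1)) = startIdx hT vs (l.take t) + lenRound hT vs (l[t]'ht) := by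
  induction l generalizing t with
  | nil => simp at ht
  | cons v l ih =>
    match t with
    | 0 =>
      simp only [List.take_succ_cons, List.take_zero, List.getElem_cons_zero]
      rw [startIdx_cons]
      simp [startIdx]
    | t + 1 =>
      simp only [List.take_succ_cons, List.getElem_cons_succ]
      rw [startIdx_cons, startIdx_cons, ih t (Nat.lt_of_succ_lt_succ ht)]
      ring

lemma startIdx_take_mono (l : List V) {a b : ℕ} (hab : a ≤ b) :
    startIdx hT vs (l.take a) ≤ startIdx hT vs (l.take b) := by
  have h1 : (l.take b).take a = l.take a := by
    rw [List.take_take, min_eq_left hab]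
  have h2 : l.take a ++ (l.take b).drop a = l.take b := by
    rw [← h1, List.take_append_drop]
  rw [startIdx, startIdx, ← h2, List.map_append, List.sum_append]
  exact Nat.le_add_right _ _

lemma support_getElem_length {u v : V} (p : T.Walk u v) :
    p.support[p.length]? = some v := by
  induction p with
  | nil => rfl
  | cons h p ih =>
    rw [Walk.support_cons, Walk.length_cons, List.getElem?_cons_succ]
    exact ih

lemma seg_getElem_pathlen (v : V) :
    (roundWalk hT vs v).support[(treePath hT vs v).length]? = some v := by
  rw [roundWalk, Walk.support_append, List.getElem?_append]
  rw [if_pos (by rw [Walk.length_support]; omega)]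
  exact support_getElem_length _

lemma one_le_treePath_length {v : V} (h : v ≠ vs) : 1 ≤ (treePath hT vs v).length := by
  by_contra hc
  push_neg at hc
  interval_cases hl : (treePath hT vs v).length
  · exact h (Walk.eq_of_length_eq_zero hl).symm

lemma BL1 (l : List V) (t : ℕ) (ht : t < l.length) (r : ℕ) (hr1 : 1 ≤ r)
    (hr2 : r < (roundWalk hT vs (l[t]'ht)).support.length) :
    (bigWalk hT vs l).support[startIdx hT vs (l.take t) + r]?
      = (roundWalk hT vs (l[t]'ht)).support[r]? := by
  induction l generalizing t with
  | nil => simp at ht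
  | cons v l ih =>
    rw [support_bigWalk_cons]
    match t with
    | 0 =>
      simp only [List.take_zero, List.getElem_cons_zero] at *
      rw [show startIdx hT vs [] = 0 from rfl, Nat.zero_add]
      rw [List.getElem?_append, if_pos hr2]
    | t + 1 =>
      simp only [List.take_succ_cons, List.getElem_cons_succ] at *
      rw [startIdx_cons]
      have hlen : (roundWalk hT vs v).support.length = lenRound hT vs v + 1 :=
        length_support_roundWalk hT vs v
      have hidx : ¬ (lenRound hT vs v + startIdx hT vs (l.take t) + r
          < (roundWalk hT vs v).support.length) := by
        rw [hlen]; omega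
      rw [List.getElem?_append, if_neg hidx, List.getElem?_tail]
      have harith : lenRound hT vs v + startIdx hT vs (l.take t) + r
          - (roundWalk hT vs v).support.length + 1 = startIdx hT vs (l.take t) + r := by
        rw [hlen]; omega
      rw [harith]
      exact ih t (Nat.lt_of_succ_lt_succ ht) hr2

lemma BL2 (l : List V) (i : ℕ) (u : V)
    (h : (bigWalk hT vs l).support[i]? = some u) :
    i ≤ startIdx hT vs l ∧ (u = vs ∨ ∃ (t : ℕ) (ht : t < l.length),
      u ∈ (treePath hT vs (l[t]'ht)).support ∧ i ≤ startIdx hT vs (l.take (t + 1))) := by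
  induction l generalizing i with
  | nil =>
    have hsup : (bigWalk hT vs ([] : List V)).support = [vs] := rfl
    rw [hsup] at h
    match i with
    | 0 =>
      refine ⟨Nat.le_refl 0 |>.trans (Nat.zero_le _), Or.inl ?_⟩
      simp only [List.getElem?_cons_zero] at h
      exact (Option.some_injective _ h).symm
    | i + 1 => simp at h
  | cons v l ih =>
    rw [support_bigWalk_cons] at h
    rw [List.getElem?_append] at h
    have hlen : (roundWalk hT vs v).support.length = lenRound hT vs v + 1 :=
      length_support_roundWalk hT vs v
    by_cases hc : i < (roundWalk hT vs v).support.length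
    · rw [if_pos hc] at h
      have hu : u ∈ (treePath hT vs v).support :=
        (support_roundWalk hT vs v).1 (List.mem_of_getElem? h)
      have hi1 : i ≤ startIdx hT vs ((v :: l).take 1) := by
        simp only [List.take_succ_cons, List.take_zero, startIdx_cons]
        rw [hlen] at hc
        have : startIdx hT vs ([] : List V) = 0 := rfl
        omega
      refine ⟨?_, Or.inr ⟨0, by simp, hu, hi1⟩⟩
      calc i ≤ startIdx hT vs ((v :: l).take 1) := hi1
      _ ≤ startIdx hT vs ((v :: l).take (v :: l).length) :=
          startIdx_take_mono hT vs _ (by simp)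
      _ = startIdx hT vs (v :: l) := by rw [List.take_length]
    · rw [if_neg hc] at h
      rw [List.getElem?_tail] at h
      push_neg at hc
      have harith : i - (roundWalk hT vs v).support.length + 1 = i - lenRound hT vs v := by
        rw [hlen]; omega
      rw [harith] at h
      obtain ⟨hle, hcase⟩ := ih _ h
      have hi : i = lenRound hT vs v + (i - lenRound hT vs v) := by rw [hlen] at hc; omega
      constructor
      · rw [startIdx_cons]; omega
      · rcases hcase with rfl | ⟨t, ht, hu, hle'⟩
        · exact Or.inl rfl
        · refine Or.inr ⟨t + 1, Nat.succ_lt_succ ht, ?_, ?_⟩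
          · simp only [List.getElem_cons_succ]; exact hu
          · simp only [List.take_succ_cons, startIdx_cons]
            omega

end Deploy

open Deploy

/-- for a finite weighted tree `T` rooted at the start vertex
`v_s`, there is an agent-minimal closed covering walk from `v_s` that visits
the collected subtrees of `T` in decreasing order of the weights of their
dominating edges: for each collected subtree there is an interval of the walk
containing (the positions of) all of its vertices and after which none of its
vertices ever appears again (it is fully explored before being left and never
re-entered afterwards), and the interval of a collected subtree with a larger
dominating edge weight comes before the interval of one with a smaller
dominating edge weight. -/
theorem return_variant_visits_in_decreasing_order
    {V : Type*} [Fintype V] [DecidableEq V] (T : SimpleGraph V) (hT : T.IsTree)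
    (wE : Sym2 V → NNReal) (wV : V → NNReal) (vs : V) :
    ∃ p : T.Walk vs vs,
      Deploy.IsCovering p ∧
      (∀ q : T.Walk vs vs, Deploy.IsCovering q →
        Deploy.agentCount wE wV p ≤ Deploy.agentCount wE wV q) ∧
      ∃ f g : Sym2 V → ℕ,
        (∀ e ∈ Deploy.DomEdges hT wE vs,
          (∀ v ∈ Deploy.csVerts hT wE vs e,
            ∃ i, f e ≤ i ∧ i ≤ g e ∧ p.support[i]? = some v) ∧
          (∀ v ∈ Deploy.csVerts hT wE vs e,
            ∀ i, p.support[i]? = some v → i ≤ g e)) ∧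
        (∀ e₁ ∈ Deploy.DomEdges hT wE vs, ∀ e₂ ∈ Deploy.DomEdges hT wE vs,
          wE e₂ < wE e₁ → g e₁ ≤ f e₂) := by
  classical
  set L := sortedL hT wE vs with hLdef
  have hsort := sortedL_sorted hT wE vs
  rw [← hLdef] at hsort
  refine ⟨bigWalk hT vs L, bigWalk_covering hT wE vs,
    fun q hq => bigWalk_minimal hT wE wV vs q hq, ?_⟩
  set P1 : Sym2 V → V → Bool := fun e x => decide (wE e < mW hT wE vs x) with hP1def
  set P2 : Sym2 V → V → Bool := fun e x => decide (wE e ≤ mW hT wE vs x) with hP2def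
  have hmono1 : ∀ e, ∀ a b : V, mW hT wE vs b ≤ mW hT wE vs a →
      P1 e b = true → P1 e a = true := by
    intro e a b hab h
    simp only [hP1def, decide_eq_true_eq] at h ⊢
    exact lt_of_lt_of_le h hab
  have hmono2 : ∀ e, ∀ a b : V, mW hT wE vs b ≤ mW hT wE vs a →
      P2 e b = true → P2 e a = true := by
    intro e a b hab h
    simp only [hP2def, decide_eq_true_eq] at h ⊢
    exact le_trans h hab
  refine ⟨fun e => startIdx hT vs (L.take (L.countP (P1 e))),
    fun e => startIdx hT vs (L.take (L.countP (P2 e))), ?_, ?_⟩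
  · intro e he
    constructor
    · -- each vertex of the collected subtree appears in the window
      intro v hv
      obtain ⟨hmv, hvvs⟩ := csVerts_spec hT wE vs he hv
      have hvL : v ∈ L := mem_sortedL hT wE vs v
      have ht : L.idxOf v < L.length := List.idxOf_lt_length_iff.2 hvL
      set t := L.idxOf v with htdef
      have hLt : L[t] = v := List.getElem_idxOf ht
      -- position of t relative to the counts
      have hiff1 := sorted_countP_iff (mW hT wE vs) (P1 e) (hmono1 e) L hsort t ht
      have hiff2 := sorted_countP_iff (mW hT wE vs) (P2 e) (hmono2 e) L hsort t ht
      have hk1 : L.countP (P1 e) ≤ t := by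
        by_contra hc
        push_neg at hc
        have := hiff1.2 hc
        rw [hLt] at this
        simp only [hP1def, decide_eq_true_eq, hmv] at this
        exact lt_irrefl _ this
      have hk2 : t < L.countP (P2 e) := by
        apply hiff2.1
        rw [hLt]
        simp only [hP2def, decide_eq_true_eq, hmv]
        exact le_rfl
      -- the explicit index
      set r := (treePath hT vs v).length with hrdef
      have hr1 : 1 ≤ r := one_le_treePath_length hT vs hvvs
      have hr2 : r < (roundWalk hT vs (L[t]'ht)).support.length := by
        rw [hLt, length_support_roundWalk, lenRound]
        omega
      refine ⟨startIdx hT vs (L.take t) + r, ?_, ?_, ?_⟩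
      · calc startIdx hT vs (L.take (L.countP (P1 e)))
            ≤ startIdx hT vs (L.take t) := startIdx_take_mono hT vs L hk1
        _ ≤ startIdx hT vs (L.take t) + r := Nat.le_add_right _ _
      · calc startIdx hT vs (L.take t) + r
            ≤ startIdx hT vs (L.take t) + lenRound hT vs (L[t]'ht) := by
              rw [hLt, lenRound]; omega
        _ = startIdx hT vs (L.take (t + 1)) := (startIdx_take_succ hT vs L t ht).symm
        _ ≤ startIdx hT vs (L.take (L.countP (P2 e))) := startIdx_take_mono hT vs L hk2
      · rw [BL1 hT vs L t ht r hr1 hr2, hLt]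
        exact seg_getElem_pathlen hT vs v
    · -- no vertex of the collected subtree appears after the window
      intro v hv i hi
      obtain ⟨hmv, hvvs⟩ := csVerts_spec hT wE vs he hv
      obtain ⟨hle, hcase⟩ := BL2 hT vs L i v hi
      rcases hcase with rfl | ⟨t, ht, hu, hle'⟩
      · exact absurd rfl hvvs
      · have hmle : mW hT wE vs v ≤ mW hT wE vs (L[t]'ht) :=
          mW_le_of_mem_support hT wE vs hu
        have hk2 : t < L.countP (P2 e) := by
          apply (sorted_countP_iff (mW hT wE vs) (P2 e) (hmono2 e) L hsort t ht).1
          simp only [hP2def, decide_eq_true_eq]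
          rw [← hmv]
          exact hmle
        calc i ≤ startIdx hT vs (L.take (t + 1)) := hle'
        _ ≤ startIdx hT vs (L.take (L.countP (P2 e))) := startIdx_take_mono hT vs L hk2
  · intro e1 _ e2 _ hlt
    apply startIdx_take_mono
    apply List.countP_mono_left
    intro x _ hx
    simp only [hP2def, decide_eq_true_eq] at hx
    simp only [hP1def, decide_eq_true_eq]
    exact lt_of_lt_of_le hlt hx
end

section
/- For any walk S from v_s in a finite connected weighted graph, at every stage of the agent-counting scan the invariant N + add = curr + Σ_{v visited so far} w_v holds, where the sum ranges over the distinct vertices visited up to that stage. -/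
section Aux

variable {V : Type*} [DecidableEq V] {G : SimpleGraph V}
variable (wE : Sym2 V → NNReal) (wV : V → NNReal)

/-- The invariant: `N + add = curr + ∑_{v visited} wV v`. -/
def ScanInv (N : NNReal) (s : Deploy.St V NNReal) : Prop :=
  N + s.add = s.curr + ∑ v ∈ s.visited, wV v

lemma scaninv_crossEdge {N : NNReal} {s : Deploy.St V NNReal} (h : ScanInv wV N s) (e : Sym2 V) :
    ScanInv wV N (Deploy.crossEdge wE e s) := by
  unfold Deploy.crossEdge
  split
  · next hlt =>
    unfold ScanInv at h ⊢
    simp only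
    have : wE e - s.curr + s.curr = wE e := tsub_add_cancel_of_le hlt.le
    calc N + (s.add + (wE e - s.curr)) = (N + s.add) + (wE e - s.curr) := by ring
      _ = (wE e - s.curr + s.curr) + ∑ v ∈ s.visited, wV v := by rw [h]; ring
      _ = wE e + ∑ v ∈ s.visited, wV v := by rw [this]
  · exact h

lemma scaninv_visitVtx {N : NNReal} {s : Deploy.St V NNReal} (h : ScanInv wV N s) (v : V) :
    ScanInv wV N (Deploy.visitVtx wV v s) := by
  unfold Deploy.visitVtx
  split
  · exact h
  · next hv =>
    split
    · next hlt =>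
      unfold ScanInv at h ⊢
      simp only [Finset.sum_insert hv]
      have : wV v - s.curr + s.curr = wV v := tsub_add_cancel_of_le hlt.le
      calc N + (s.add + (wV v - s.curr)) = (N + s.add) + (wV v - s.curr) := by ring
        _ = (wV v - s.curr + s.curr) + ∑ x ∈ s.visited, wV x := by rw [h]; ring
        _ = 0 + (wV v + ∑ x ∈ s.visited, wV x) := by rw [this]; ring
    · next hge =>
      unfold ScanInv at h ⊢
      simp only [Finset.sum_insert hv]
      have : s.curr - wV v + wV v = s.curr := tsub_add_cancel_of_le (not_lt.mp hge)
      calc N + s.add = s.curr + ∑ x ∈ s.visited, wV x := h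
        _ = (s.curr - wV v + wV v) + ∑ x ∈ s.visited, wV x := by rw [this]
        _ = s.curr - wV v + (wV v + ∑ x ∈ s.visited, wV x) := by ring

lemma scaninv_scanWalk {N : NNReal} {u t : V} (p : G.Walk u t) {s : Deploy.St V NNReal}
    (h : ScanInv wV N s) : ScanInv wV N (Deploy.scanWalk wE wV p s) := by
  induction p generalizing s with
  | nil => exact h
  | cons _ _ ih => exact ih (scaninv_visitVtx wV (scaninv_crossEdge wE wV h _) _)

lemma visited_crossEdge (e : Sym2 V) (s : Deploy.St V NNReal) :
    (Deploy.crossEdge wE e s).visited = s.visited := by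
  unfold Deploy.crossEdge; split <;> rfl

lemma visited_visitVtx (v : V) (s : Deploy.St V NNReal) :
    (Deploy.visitVtx wV v s).visited = insert v s.visited := by
  unfold Deploy.visitVtx
  split
  · next hv => exact (Finset.insert_eq_self.mpr hv).symm
  · split <;> rfl

lemma visited_scanWalk {u t : V} (p : G.Walk u t) (s : Deploy.St V NNReal) :
    (Deploy.scanWalk wE wV p s).visited = s.visited ∪ p.support.tail.toFinset := by
  induction p generalizing s with
  | nil => simp [Deploy.scanWalk]
  | cons _ p ih =>
    rw [Deploy.scanWalk, ih, visited_visitVtx, visited_crossEdge]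
    simp only [SimpleGraph.Walk.support_cons, List.tail_cons]
    rw [SimpleGraph.Walk.support_eq_cons p]
    simp [Finset.insert_union]
    rw [← Finset.union_insert, ← List.toFinset_cons, ← SimpleGraph.Walk.support_eq_cons]

end Aux

/-- at every stage of the agent-counting scan (equivalently, after
scanning any walk `S` from `v_s` — prefixes of walks are walks), the invariant
`N + add = curr + ∑_{v visited so far} w_v` holds, where the sum ranges over
the distinct vertices visited so far. -/
theorem scan_invariant
    {V : Type*} [Fintype V] [DecidableEq V] (G : SimpleGraph V) (hG : G.Connected)
    (wE : Sym2 V → NNReal) (wV : V → NNReal) (vs : V)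
    (t : V) (p : G.Walk vs t) :
    (∑ v, wV v) +
        (Deploy.scanWalk wE wV p (Deploy.visitVtx wV vs ⟨∅, ∑ v, wV v, 0⟩)).add =
      (Deploy.scanWalk wE wV p (Deploy.visitVtx wV vs ⟨∅, ∑ v, wV v, 0⟩)).curr +
        ∑ v ∈ p.support.toFinset, wV v := by
  have h0 : ScanInv wV (∑ v, wV v) (⟨∅, ∑ v, wV v, 0⟩ : Deploy.St V NNReal) := by
    unfold ScanInv; simp
  have h1 := scaninv_scanWalk wE wV p (scaninv_visitVtx wV h0 vs)
  have h2 := visited_scanWalk wE wV p (Deploy.visitVtx wV vs ⟨∅, ∑ v, wV v, 0⟩)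
  rw [visited_visitVtx] at h2
  unfold ScanInv at h1
  rw [h1, h2]
  congr 2
  rw [SimpleGraph.Walk.support_eq_cons p]
  simp [Finset.insert_union]
  rw [← List.toFinset_cons, ← SimpleGraph.Walk.support_eq_cons]
end

section
/- For any walk S from v_s in a finite connected weighted graph, the agent count of S is at most N + w_max(S), where w_max(S) is the maximum weight of an edge traversed by S (and w_max(S) = 0 if S traverses no edge). Consequently, taking a depth-first-search closed walk of the graph, at most N + w_max agents are required in total, where w_max is the maximum edge weight of the graph. -/
namespace DeployAux

open Deploy

variable {V : Type*} [DecidableEq V] {G : SimpleGraph V}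

/-- The potential of a state: available agents plus settled agents. -/
def stf (wV : V → NNReal) (s : St V NNReal) : NNReal :=
  s.curr + ∑ v ∈ s.visited, wV v

lemma crossEdge_inv_s10 [Fintype V] (wE : Sym2 V → NNReal) (wV : V → NNReal)
    (e : Sym2 V) (s : St V NNReal)
    (h1 : stf wV s = (∑ x, wV x) + s.add) :
    stf wV (crossEdge wE e s) = (∑ x, wV x) + (crossEdge wE e s).add ∧
      stf wV (crossEdge wE e s) ≤ max (stf wV s) ((∑ x, wV x) + wE e) := by
  unfold crossEdge
  split
  · next h =>
    have hle : s.curr ≤ wE e := le_of_lt h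
    have hsettled : ∑ v ∈ s.visited, wV v ≤ ∑ x, wV x :=
      Finset.sum_le_sum_of_subset (Finset.subset_univ _)
    constructor
    · show wE e + ∑ v ∈ s.visited, wV v = (∑ x, wV x) + (s.add + (wE e - s.curr))
      have : (∑ x, wV x) + (s.add + (wE e - s.curr))
          = ((∑ x, wV x) + s.add) + (wE e - s.curr) := by ring
      rw [this, ← h1]
      show wE e + ∑ v ∈ s.visited, wV v
          = (s.curr + ∑ v ∈ s.visited, wV v) + (wE e - s.curr)
      have : (s.curr + ∑ v ∈ s.visited, wV v) + (wE e - s.curr)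
          = (s.curr + (wE e - s.curr)) + ∑ v ∈ s.visited, wV v := by ring
      rw [this, add_tsub_cancel_of_le hle]
    · show wE e + ∑ v ∈ s.visited, wV v ≤ _
      exact le_max_of_le_right (by rw [add_comm]; exact add_le_add_left hsettled _)
  · exact ⟨h1, le_max_left _ _⟩

lemma visitVtx_inv_s10 [Fintype V] (wV : V → NNReal) (v : V) (s : St V NNReal)
    (h1 : stf wV s = (∑ x, wV x) + s.add) :
    stf wV (visitVtx wV v s) = stf wV s ∧ (visitVtx wV v s).add = s.add := by
  unfold visitVtx
  split
  · exact ⟨rfl, rfl⟩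
  · next hv =>
    have hins : ∑ x ∈ insert v s.visited, wV x = wV v + ∑ x ∈ s.visited, wV x :=
      Finset.sum_insert hv
    have hsettled : ∑ x ∈ insert v s.visited, wV x ≤ ∑ x, wV x :=
      Finset.sum_le_sum_of_subset (Finset.subset_univ _)
    have hkey : wV v ≤ s.curr := by
      have h2 : wV v + ∑ x ∈ s.visited, wV x ≤ s.curr + ∑ x ∈ s.visited, wV x := by
        rw [← hins]
        calc ∑ x ∈ insert v s.visited, wV x ≤ ∑ x, wV x := hsettled
          _ ≤ (∑ x, wV x) + s.add := le_self_add
          _ = s.curr + ∑ x ∈ s.visited, wV x := h1.symm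
      exact le_of_add_le_add_right h2
    split
    · next h => exact absurd hkey (not_le.mpr h)
    · constructor
      · show (s.curr - wV v) + ∑ x ∈ insert v s.visited, wV x
            = s.curr + ∑ x ∈ s.visited, wV x
        rw [hins, ← add_assoc, tsub_add_cancel_of_le hkey]
      · rfl

lemma scan_inv [Fintype V] (wE : Sym2 V → NNReal) (wV : V → NNReal) :
    ∀ {u t : V} (p : G.Walk u t) (s : St V NNReal),
    stf wV s = (∑ x, wV x) + s.add →
    stf wV (scanWalk wE wV p s) = (∑ x, wV x) + (scanWalk wE wV p s).add ∧
      stf wV (scanWalk wE wV p s)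
        ≤ max (stf wV s) ((∑ x, wV x) + (p.edges.map wE).foldr max 0) := by
  intro u t p
  induction p with
  | nil => intro s h1; exact ⟨h1, le_max_left _ _⟩
  | @cons a b c hab p ih =>
    intro s h1
    obtain ⟨hc1, hc2⟩ := crossEdge_inv_s10 wE wV s(a, b) s h1
    obtain ⟨hv1, _⟩ := visitVtx_inv_s10 wV b _ hc1
    have hv1' : stf wV (visitVtx wV b (crossEdge wE s(a,b) s))
        = (∑ x, wV x) + (visitVtx wV b (crossEdge wE s(a,b) s)).add := by
      rw [hv1, (visitVtx_inv_s10 wV b _ hc1).2, hc1]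
    obtain ⟨hi1, hi2⟩ := ih _ hv1'
    refine ⟨hi1, ?_⟩
    simp only [SimpleGraph.Walk.edges_cons, List.map_cons, List.foldr_cons]
    calc stf wV (scanWalk wE wV (SimpleGraph.Walk.cons hab p) s)
        ≤ max (stf wV (visitVtx wV b (crossEdge wE s(a,b) s)))
          ((∑ x, wV x) + (p.edges.map wE).foldr max 0) := hi2
      _ ≤ max (max (stf wV s) ((∑ x, wV x) + wE s(a,b)))
          ((∑ x, wV x) + (p.edges.map wE).foldr max 0) := by
            rw [hv1]; exact max_le_max hc2 le_rfl
      _ ≤ max (stf wV s)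
          ((∑ x, wV x) + max (wE s(a,b)) ((p.edges.map wE).foldr max 0)) :=
            max_le (max_le (le_max_left _ _)
                (le_max_of_le_right (add_le_add_right (le_max_left _ _) _)))
              (le_max_of_le_right (add_le_add_right (le_max_right _ _) _))

lemma agentCount_le [Fintype V] (wE : Sym2 V → NNReal) (wV : V → NNReal)
    {vs t : V} (p : G.Walk vs t) :
    agentCount wE wV p ≤ (∑ v, wV v) + (p.edges.map wE).foldr max 0 := by
  set s0 : St V NNReal := ⟨∅, ∑ v, wV v, 0⟩ with hs0
  have h0 : stf wV s0 = (∑ x, wV x) + s0.add := by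
    simp [stf, hs0]
  obtain ⟨hv1, hv2⟩ := visitVtx_inv_s10 wV vs s0 h0
  have h1 : stf wV (visitVtx wV vs s0) = (∑ x, wV x) + (visitVtx wV vs s0).add := by
    rw [hv1, hv2, h0]
  obtain ⟨hi1, hi2⟩ := scan_inv wE wV p _ h1
  have hstf0 : stf wV (visitVtx wV vs s0) = ∑ x, wV x := by
    rw [hv1]; simp [stf, hs0]
  rw [hstf0] at hi2
  have : (∑ x, wV x) + (scanWalk wE wV p (visitVtx wV vs s0)).add
      ≤ (∑ x, wV x) + (p.edges.map wE).foldr max 0 := by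
    rw [← hi1]
    exact hi2.trans (max_le le_self_add le_rfl)
  exact this

lemma exists_cover [Fintype V] (hG : G.Connected) (vs : V) (T : Finset V) :
    ∃ p : G.Walk vs vs, ∀ v ∈ T, v ∈ p.support := by
  classical
  induction T using Finset.induction with
  | empty => exact ⟨.nil, by simp⟩
  | @insert a T ha ih =>
    obtain ⟨p, hp⟩ := ih
    obtain ⟨q⟩ := hG vs a
    refine ⟨(q.append q.reverse).append p, ?_⟩
    intro v hv
    rw [Finset.mem_insert] at hv
    rcases hv with rfl | hv
    · rw [SimpleGraph.Walk.mem_support_append_iff,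
        SimpleGraph.Walk.mem_support_append_iff]
      exact Or.inl (Or.inl q.end_mem_support)
    · rw [SimpleGraph.Walk.mem_support_append_iff]
      exact Or.inr (hp v hv)

lemma foldr_max_le {l : List NNReal} {b : NNReal} (h : ∀ a ∈ l, a ≤ b) :
    l.foldr max 0 ≤ b := by
  induction l with
  | nil => exact zero_le
  | cons a l ih =>
    simp only [List.foldr_cons, max_le_iff]
    exact ⟨h a (List.mem_cons_self), ih fun x hx => h x (List.mem_cons_of_mem a hx)⟩

end DeployAux

open scoped Classical in
/-- the agent count of any walk `S` from `v_s` is at most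
`N + w_max(S)`, where `w_max(S)` is the maximum weight of an edge traversed by
`S` (taken as `0` if `S` traverses no edge).  Consequently (taking a
depth-first-search closed walk of the connected graph `G`) there is a closed
covering walk whose agent count is at most `N + w_max`, where `w_max` is the
maximum edge weight of `G`. -/
theorem agentCount_upper_bound
    {V : Type*} [Fintype V] [DecidableEq V] (G : SimpleGraph V) (hG : G.Connected)
    (wE : Sym2 V → NNReal) (wV : V → NNReal) (vs : V) :
    (∀ (t : V) (p : G.Walk vs t),
      Deploy.agentCount wE wV p ≤ (∑ v, wV v) + (p.edges.map wE).foldr max 0) ∧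
    ∃ p : G.Walk vs vs, Deploy.IsCovering p ∧
      Deploy.agentCount wE wV p ≤ (∑ v, wV v) + G.edgeFinset.sup wE := by
  constructor
  · intro t p
    exact DeployAux.agentCount_le wE wV p
  · obtain ⟨p, hp⟩ := DeployAux.exists_cover hG vs Finset.univ
    refine ⟨p, fun v => hp v (Finset.mem_univ v), ?_⟩
    refine (DeployAux.agentCount_le wE wV p).trans (add_le_add_right ?_ _)
    refine DeployAux.foldr_max_le ?_
    intro a ha
    rw [List.mem_map] at ha
    obtain ⟨e, he, rfl⟩ := ha
    exact Finset.le_sup (SimpleGraph.mem_edgeFinset.mpr (p.edges_subset_edgeSet he))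
end

section
/- Let G be a finite connected simple graph on at least two vertices with nonnegative real edge weights, and let T be a spanning tree of G of minimum total edge weight. Then T minimizes the bottleneck: for every spanning tree T' of G, the maximum edge weight occurring in T is at most the maximum edge weight occurring in T'. -/
open SimpleGraph


lemma del_reach {V : Type*} {H : SimpleGraph V} (u v : V) {a b : V} (p : H.Walk a b) :
    (H.deleteEdges {s(u,v)}).Reachable a b ∨
      ((H.deleteEdges {s(u,v)}).Reachable a u ∧ (H.deleteEdges {s(u,v)}).Reachable v b) ∨
      ((H.deleteEdges {s(u,v)}).Reachable a v ∧ (H.deleteEdges {s(u,v)}).Reachable u b) := by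
  set D := H.deleteEdges {s(u,v)} with hD
  induction p with
  | nil => exact Or.inl (Reachable.refl _)
  | @cons a c b h q ih =>
    by_cases hac : s(a, c) = s(u, v)
    · rw [Sym2.eq_iff] at hac
      rcases hac with ⟨rfl, rfl⟩ | ⟨rfl, rfl⟩
      · rcases ih with h1 | ⟨h1, h2⟩ | ⟨h1, h2⟩
        · exact Or.inr (Or.inl ⟨Reachable.refl _, h1⟩)
        · exact Or.inl (h1.symm.trans h2)
        · exact Or.inl h2
      · rcases ih with h1 | ⟨h1, h2⟩ | ⟨h1, h2⟩
        · exact Or.inr (Or.inr ⟨Reachable.refl _, h1⟩)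
        · exact Or.inl h2
        · exact Or.inl (h1.symm.trans h2)
    · have hadj : D.Adj a c := by simp [hD, deleteEdges_adj, h, hac]
      rcases ih with h1 | ⟨h1, h2⟩ | ⟨h1, h2⟩
      · exact Or.inl (hadj.reachable.trans h1)
      · exact Or.inr (Or.inl ⟨hadj.reachable.trans h1, h2⟩)
      · exact Or.inr (Or.inr ⟨hadj.reachable.trans h1, h2⟩)

lemma del_reach' {V : Type*} {H : SimpleGraph V} (u v : V) {a : V} (p : H.Walk a u) :
    (H.deleteEdges {s(u,v)}).Reachable a u ∨ (H.deleteEdges {s(u,v)}).Reachable a v := by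
  rcases del_reach u v p with h1 | ⟨h1, h2⟩ | ⟨h1, h2⟩
  · exact Or.inl h1
  · exact Or.inl h1
  · exact Or.inr h1

open scoped Classical in
/-- a minimum spanning tree of a finite connected simple graph
`G` on at least two vertices (with nonnegative real edge weights) minimizes
the bottleneck: the maximum edge weight of a minimum spanning tree `T` is at
most the maximum edge weight of any spanning tree `T'`. -/
theorem mst_minimizes_bottleneck
    {V : Type*} [Fintype V] [DecidableEq V] (G : SimpleGraph V)
    (hcard : 1 < Fintype.card V) (hG : G.Connected)
    (wE : Sym2 V → NNReal)
    (T : SimpleGraph V) (hTG : T ≤ G) (hT : T.IsTree)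
    (hmin : ∀ T' : SimpleGraph V, T' ≤ G → T'.IsTree →
      ∑ e ∈ T.edgeFinset, wE e ≤ ∑ e ∈ T'.edgeFinset, wE e) :
    ∀ T' : SimpleGraph V, T' ≤ G → T'.IsTree →
      T.edgeFinset.sup wE ≤ T'.edgeFinset.sup wE := by
  intro T' hT'G hT'
  by_contra hcon
  rw [not_le] at hcon
  obtain ⟨e, heT, he⟩ := Finset.lt_sup_iff.mp hcon
  obtain ⟨u, v⟩ := e
  have huv : T.Adj u v := mem_edgeFinset.mp heT
  -- the edge is a bridge of T
  have hbr : ¬(T \ fromEdgeSet {s(u,v)}).Reachable u v :=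
    ((isBridge_iff.mp ((isAcyclic_iff_forall_adj_isBridge.mp hT.IsAcyclic) huv)))
  set T₁ : SimpleGraph V := T.deleteEdges {s(u,v)} with hT₁def
  have hnr : ¬T₁.Reachable u v := hbr
  -- the cut
  set S : Set V := {a : V | T₁.Reachable u a} with hSdef
  have huS : u ∈ S := Reachable.refl _
  have hvS : v ∉ S := hnr
  -- boundary dart of a walk in T'
  obtain ⟨d, hd, hxS, hyS⟩ :=
    ((hT'.isConnected.preconnected u v).some).exists_boundary_dart S huS hvS
  set x := d.fst with hxdef
  set y := d.snd with hydef
  have hfT' : T'.Adj x y := d.adj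
  have hxy : x ≠ y := fun h => hyS (h ▸ hxS)
  -- the swap graph
  set T₂ : SimpleGraph V := T₁ ⊔ fromEdgeSet {s(x,y)} with hT₂def
  have hle : T₁ ≤ T₂ := le_sup_left
  have hxy₂ : T₂.Adj x y := Or.inr ⟨rfl, hxy⟩
  have hfT₁ : ¬T₁.Adj x y := fun h => hyS (hxS.trans h.reachable)
  -- T₂ ≤ G
  have hT₂G : T₂ ≤ G := by
    intro a b hab
    rcases hab with hab | hab
    · exact hTG (deleteEdges_le _ hab)
    · rw [fromEdgeSet_adj] at hab
      obtain ⟨hab, -⟩ := hab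
      rw [Set.mem_singleton_iff, Sym2.eq_iff] at hab
      rcases hab with ⟨rfl, rfl⟩ | ⟨rfl, rfl⟩
      · exact hT'G hfT'
      · exact (hT'G hfT').symm
  -- connectivity of T₂
  have key : ∀ a, T₂.Reachable a u ∨ T₂.Reachable a v := fun a =>
    (del_reach' u v ((hT.isConnected.preconnected a u).some)).imp
      (Reachable.mono hle) (Reachable.mono hle)
  have huv₂ : T₂.Reachable u v := by
    have hyv : T₁.Reachable y v := by
      rcases del_reach' u v ((hT.isConnected.preconnected y u).some) with h1 | h1
      · exact absurd h1.symm hyS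
      · exact h1
    exact ((hxS.mono hle).trans hxy₂.reachable).trans (hyv.mono hle)
  have hT₂conn : T₂.Connected := by
    haveI : Nonempty V := Fintype.card_pos_iff.mp (by omega)
    refine ⟨fun a b => ?_⟩
    rcases key a with ha | ha <;> rcases key b with hb | hb
    · exact ha.trans hb.symm
    · exact ha.trans (huv₂.trans hb.symm)
    · exact ha.trans (huv₂.symm.trans hb.symm)
    · exact ha.trans hb.symm
  -- acyclicity of T₂
  have hT₂ac : T₂.IsAcyclic := by
    intro a c hc
    by_cases hf : s(x,y) ∈ c.edges
    · have hreach : (T₂ \ fromEdgeSet {s(x,y)}).Reachable x y :=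
        (adj_and_reachable_delete_edges_iff_exists_cycle.mpr ⟨a, c, hc, hf⟩).2
      have hle2 : (T₂ \ fromEdgeSet {s(x,y)}) ≤ T₁ := by
        intro p q hpq
        obtain ⟨hpq1 | hpq1, hpq2⟩ := hpq
        · exact hpq1
        · exact absurd hpq1 hpq2
      exact hyS (hxS.trans (hreach.mono hle2))
    · -- transfer the cycle to T₁, then to T, contradicting T acyclic
      have hsub : ∀ e' ∈ c.edges, e' ∈ T₁.edgeSet := by
        intro e' he'
        have : e' ∈ T₂.edgeSet := c.edges_subset_edgeSet he'
        rw [hT₂def, edgeSet_sup, edgeSet_fromEdgeSet] at this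
        rcases this with h1 | ⟨h1, -⟩
        · exact h1
        · exact absurd (Set.mem_singleton_iff.mp h1 ▸ he') hf
      have hc1 : ((c.transfer T₁ hsub)).IsCycle := hc.transfer hsub
      exact hT.IsAcyclic _ ((hc1.mapLe (deleteEdges_le _ : T₁ ≤ T)))
  have hT₂tree : T₂.IsTree := ⟨hT₂conn, hT₂ac⟩
  -- edge finset of T₂
  have hedge : T₂.edgeFinset = insert (s(x,y)) (T.edgeFinset.erase (s(u,v))) := by
    ext a
    simp only [mem_edgeFinset, Finset.mem_insert, Finset.mem_erase, hT₂def, hT₁def,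
      edgeSet_sup, edgeSet_fromEdgeSet, edgeSet_deleteEdges, Set.mem_union, Set.mem_diff,
      Set.mem_singleton_iff, Set.mem_setOf_eq, mem_edgeFinset]
    constructor
    · rintro (⟨h1, h2⟩ | ⟨h1, -⟩)
      · exact Or.inr ⟨h2, h1⟩
      · exact Or.inl h1
    · rintro (rfl | ⟨h1, h2⟩)
      · exact Or.inr ⟨rfl, by simp [Sym2.mk_isDiag_iff, hxy]⟩
      · exact Or.inl ⟨h2, h1⟩
  have hfnot : s(x,y) ∉ T.edgeFinset.erase (s(u,v)) := by
    intro h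
    obtain ⟨h1, h2⟩ := Finset.mem_erase.mp h
    refine hfT₁ ?_
    rw [hT₁def, deleteEdges_adj]
    exact ⟨mem_edgeFinset.mp h2, by simp [h1]⟩
  -- weight comparison
  have hsum : ∑ e ∈ T₂.edgeFinset, wE e
      = wE s(x,y) + ∑ e ∈ T.edgeFinset.erase (s(u,v)), wE e := by
    rw [hedge, Finset.sum_insert hfnot]
  have hsumT : wE s(u,v) + ∑ e ∈ T.edgeFinset.erase (s(u,v)), wE e
      = ∑ e ∈ T.edgeFinset, wE e := Finset.add_sum_erase _ _ heT
  have hwf : wE s(x,y) ≤ T'.edgeFinset.sup wE :=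
    Finset.le_sup (mem_edgeFinset.mpr hfT')
  have hlt : ∑ e ∈ T₂.edgeFinset, wE e < ∑ e ∈ T.edgeFinset, wE e := by
    rw [hsum, ← hsumT]
    exact add_lt_add_of_lt_of_le (lt_of_le_of_lt hwf he) le_rfl
  refine absurd (hmin T₂ hT₂G hT₂tree) (not_le.mpr ?_)
  convert hlt using 2
  congr!
end

section
/- Let G be a finite connected simple graph on at least two vertices with nonnegative real edge weights, and let T be a minimum spanning tree of G with maximum edge weight w*. Then every walk in G that starts at a vertex v_s and visits every vertex of G traverses at least one edge of weight at least w*. -/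
open SimpleGraph

/-- After deleting the edge `s(a,b)` from `T`, every vertex reachable in `T`
from a vertex on one of the two sides remains reachable from `a` or `b`. -/
private lemma reach_side {V : Type*} (T : SimpleGraph V) (a b : V) :
    ∀ {x y : V}, T.Walk x y →
    ((T.deleteEdges {s(a,b)}).Reachable a x ∨ (T.deleteEdges {s(a,b)}).Reachable b x) →
    ((T.deleteEdges {s(a,b)}).Reachable a y ∨ (T.deleteEdges {s(a,b)}).Reachable b y) := by
  intro x y w
  induction w with
  | nil => exact id
  | @cons u c v h q ih =>
    intro hx
    apply ih
    by_cases he : s(u, c) = s(a, b)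
    · rw [Sym2.eq_iff] at he
      rcases he with ⟨rfl, rfl⟩ | ⟨rfl, rfl⟩
      · exact Or.inr (Reachable.refl _)
      · exact Or.inl (Reachable.refl _)
    · have hadj : (T.deleteEdges {s(a,b)}).Adj u c := by
        rw [SimpleGraph.deleteEdges_adj]
        exact ⟨h, by simpa using he⟩
      rcases hx with hx | hx
      · exact Or.inl (hx.trans hadj.reachable)
      · exact Or.inr (hx.trans hadj.reachable)

open scoped Classical in
/-- let `T` be a minimum spanning tree of a finite connected
simple graph `G` on at least two vertices, with maximum edge weight `w*`.
Every walk in `G` that starts at a vertex `v_s` and visits every vertex of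
`G` traverses at least one edge of weight at least `w*`. -/
theorem covering_walk_crosses_heavy_edge
    {V : Type*} [Fintype V] [DecidableEq V] (G : SimpleGraph V)
    (hcard : 1 < Fintype.card V) (hG : G.Connected)
    (wE : Sym2 V → NNReal)
    (T : SimpleGraph V) (hTG : T ≤ G) (hT : T.IsTree)
    (hmin : ∀ T' : SimpleGraph V, T' ≤ G → T'.IsTree →
      ∑ e ∈ T.edgeFinset, wE e ≤ ∑ e ∈ T'.edgeFinset, wE e)
    (vs t : V) (p : G.Walk vs t) (hp : ∀ v : V, v ∈ p.support) :
    ∃ e ∈ p.edges, T.edgeFinset.sup wE ≤ wE e := by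
  -- T has at least one edge
  have hTcard : T.edgeFinset.card + 1 = Fintype.card V := hT.card_edgeFinset
  have hne : T.edgeFinset.Nonempty := by
    rw [← Finset.card_pos]
    omega
  obtain ⟨estar, hestar, hsup⟩ := Finset.exists_mem_eq_sup _ hne wE
  rw [hsup]
  clear hsup
  induction estar using Sym2.ind with
  | _ a b =>
  have hab : T.Adj a b := SimpleGraph.mem_edgeFinset.mp hestar
  set T' := T.deleteEdges {s(a,b)} with hT'def
  -- the deleted edge is a bridge of T
  have hbridge : ¬ T'.Reachable a b := by
    have hb := (isAcyclic_iff_forall_adj_isBridge.mp hT.2) hab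
    rw [isBridge_iff] at hb
    exact hb
  set S : Set V := {x | T'.Reachable a x} with hSdef
  have haS : a ∈ S := Reachable.refl _
  have hbS : b ∉ S := hbridge
  -- every vertex is reachable from a or from b in T'
  have hside : ∀ x : V, T'.Reachable a x ∨ T'.Reachable b x := fun x =>
    reach_side T a b (hT.1 a x).some (Or.inl (Reachable.refl _))
  -- find a crossing dart in the walk
  have hcross : ∃ u v : V, u ∈ S ∧ v ∉ S ∧ G.Adj u v ∧ s(u, v) ∈ p.edges := by
    by_cases hvs : vs ∈ S
    · obtain ⟨d, hd, hd1, hd2⟩ :=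
        (p.takeUntil b (hp b)).exists_boundary_dart S hvs hbS
      exact ⟨d.fst, d.snd, hd1, hd2, d.adj,
        Walk.edges_takeUntil_subset _ _ (List.mem_map_of_mem (f := Dart.edge) hd)⟩
    · obtain ⟨d, hd, hd1, hd2⟩ :=
        (p.takeUntil a (hp a)).exists_boundary_dart Sᶜ hvs (by simpa using haS)
      refine ⟨d.snd, d.fst, by simpa using hd2, hd1, d.adj.symm, ?_⟩
      rw [Sym2.eq_swap]
      exact Walk.edges_takeUntil_subset _ _ (List.mem_map_of_mem (f := Dart.edge) hd)
  obtain ⟨u, v, huS, hvS, huv, hedge⟩ := hcross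
  have huvreach : u ∈ S → ¬ T'.Reachable u v := fun hu hr => hvS (hu.trans hr)
  refine ⟨s(u, v), hedge, ?_⟩
  by_contra hlt
  push_neg at hlt
  -- the exchange graph
  have hfne : s(u, v) ≠ s(a, b) := fun h => absurd (h ▸ hlt) (lt_irrefl _)
  have hfT : s(u, v) ∉ T.edgeSet := by
    intro hmem
    apply huvreach huS
    exact Adj.reachable (by rw [SimpleGraph.deleteEdges_adj]; exact ⟨hmem, by simpa using hfne⟩)
  set T'' : SimpleGraph V := T' ⊔ SimpleGraph.fromEdgeSet {s(u, v)} with hT''def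
  have hT'le : T' ≤ T'' := le_sup_left
  have huvT'' : T''.Adj u v := Or.inr (by rw [SimpleGraph.fromEdgeSet_adj]; exact ⟨rfl, huv.ne⟩)
  have hT''G : T'' ≤ G := by
    apply sup_le ((T.deleteEdges_le _).trans hTG)
    intro x y hxy
    rw [SimpleGraph.fromEdgeSet_adj, Set.mem_singleton_iff, Sym2.eq_iff] at hxy
    rcases hxy.1 with ⟨rfl, rfl⟩ | ⟨rfl, rfl⟩
    · exact huv
    · exact huv.symm
  -- T'' is connected
  have hreachab : T''.Reachable a b := by
    have hbv : T'.Reachable b v := (hside v).resolve_left hvS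
    exact ((huS.mono hT'le).trans huvT''.reachable).trans (hbv.mono hT'le).symm
  have hconn : T''.Connected := by
    rw [connected_iff]
    refine ⟨fun x y => ?_, hT.1.nonempty⟩
    have key : ∀ z : V, T''.Reachable a z := fun z => by
      rcases hside z with h | h
      · exact h.mono hT'le
      · exact hreachab.trans (h.mono hT'le)
    exact (key x).symm.trans (key y)
  -- edges of T''
  have hT''edges : T''.edgeFinset = insert s(u, v) (T.edgeFinset.erase s(a, b)) := by
    ext e
    simp only [SimpleGraph.mem_edgeFinset, Finset.mem_insert, Finset.mem_erase,
      SimpleGraph.mem_edgeFinset, hT''def, SimpleGraph.edgeSet_sup,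
      Set.mem_union, hT'def, SimpleGraph.edgeSet_deleteEdges, Set.mem_diff,
      SimpleGraph.edgeSet_fromEdgeSet, Set.mem_singleton_iff, Set.mem_setOf_eq]
    constructor
    · rintro (⟨he, hne'⟩ | ⟨rfl, _⟩)
      · exact Or.inr ⟨hne', he⟩
      · exact Or.inl rfl
    · rintro (rfl | ⟨hne', he⟩)
      · exact Or.inr ⟨rfl, Sym2.mk_isDiag_iff.not.mpr huv.ne⟩
      · exact Or.inl ⟨he, hne'⟩
  have hfnotmem : s(u, v) ∉ T.edgeFinset.erase s(a, b) := fun h =>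
    hfT (SimpleGraph.mem_edgeFinset.mp (Finset.mem_of_mem_erase h))
  -- T'' is acyclic
  have hacyclic : T''.IsAcyclic := by
    intro x c hc
    by_cases hf : s(u, v) ∈ c.edges
    · -- the edge s(u,v) would not be a bridge, but deleting it lands inside T'
      have hbr : T''.IsBridge s(u, v) := by
        rw [isBridge_iff]
        refine fun hr => huvreach huS (hr.mono ?_)
        intro x y hxy
        rw [SimpleGraph.deleteEdges_adj] at hxy
        obtain ⟨hadj, hnf⟩ := hxy
        rcases (SimpleGraph.sup_adj _ _ _ _).mp hadj with h | h
        · exact h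
        · exact absurd h.1 hnf
      exact ((isBridge_iff_forall_cycle_notMem huvT'').mp hbr) c hc hf
    · -- the cycle avoids s(u,v), hence lives in T, contradicting acyclicity of T
      have hsub : ∀ e ∈ c.edges, e ∈ T.edgeSet := by
        intro e he
        have := c.edges_subset_edgeSet he
        rw [hT''def, SimpleGraph.edgeSet_sup, SimpleGraph.edgeSet_fromEdgeSet] at this
        rcases this with h | h
        · rw [hT'def, SimpleGraph.edgeSet_deleteEdges] at h
          exact h.1
        · exact absurd (h.1 : e = s(u, v)) (fun hh => hf (hh ▸ he))
      exact hT.2 (c.transfer T hsub) (hc.transfer hsub)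
  -- the swap strictly decreases the weight: contradiction with minimality
  have hmins : ∑ e ∈ T.edgeFinset, wE e ≤ ∑ e ∈ T''.edgeFinset, wE e := by
    have h := hmin T'' hT''G ⟨hconn, hacyclic⟩
    convert h using 2 <;> congr! <;> exact Subsingleton.elim _ _
  rw [hT''edges, Finset.sum_insert hfnotmem] at hmins
  rw [← Finset.add_sum_erase _ wE hestar] at hmins
  have : wE s(a, b) ≤ wE s(u, v) := le_of_add_le_add_right (by
    rwa [add_comm (wE s(a,b)), add_comm (wE s(u,v))] at hmins)
  exact absurd this (not_le_of_gt hlt)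
end

section
/- Consider the star graph with center v_s of vertex weight 0 and n ≥ 1 leaves b_1, …, b_n, where leaf b_i has vertex weight 1 and the edge (v_s, b_i) has weight i. Then the minimum agent count over all closed covering walks from v_s equals n + 1, and it is attained by visiting the leaves in decreasing order of edge weights b_n, b_{n−1}, …, b_1. Moreover, every closed covering walk with agent count n + 1 makes its first visits to the leaves exactly in this decreasing order. -/
namespace Deploy

/-- The star graph on `Option (Fin n)`: the center `none` is adjacent to every
leaf `some i`, and there are no other edges. -/
def starGraph (n : ℕ) : SimpleGraph (Option (Fin n)) :=
  SimpleGraph.fromRel (fun u _ => u = none)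

/-- Edge weights of the weighted star: the edge from the center to leaf `b_i`
(`i` counted from `1`) has weight `i`; formally the edge `s(none, some i)` has
weight `i + 1`. -/
def starWE (n : ℕ) : Sym2 (Option (Fin n)) → ℕ :=
  Sym2.lift ⟨fun u v =>
    match u, v with
    | none, some i => (i : ℕ) + 1
    | some i, none => (i : ℕ) + 1
    | _, _ => 0,
    by rintro (_ | i) (_ | j) <;> rfl⟩

/-- Vertex weights of the weighted star: the center has weight `0`, every leaf
has weight `1`. -/
def starWV (n : ℕ) : Option (Fin n) → ℕ
  | none => 0
  | some _ => 1

end Deploy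

section IndexOfHelpers

variable {α : Type*} [BEq α] [LawfulBEq α] [DecidableEq α]

theorem indexOf_cons' (a b : α) (l : List α) :
    (b :: l).idxOf a = if b = a then 0 else l.idxOf a + 1 := by
  simp only [List.idxOf, List.findIdx_cons, Bool.cond_eq_ite, beq_iff_eq]

theorem indexOf_lt' {a : α} : ∀ {l : List α}, a ∈ l → l.idxOf a < l.length := by
  intro l h
  induction l with
  | nil => simp at h
  | cons b l ih =>
      rw [indexOf_cons']
      by_cases hba : b = a
      · simp [hba]
      · have : a ∈ l := by
          rcases List.mem_cons.1 h with h' | h'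
          · exact absurd h'.symm hba
          · exact h'
        simp only [if_neg hba, List.length_cons]
        exact Nat.succ_lt_succ (ih this)

theorem getElem_indexOf' {a : α} : ∀ {l : List α}, a ∈ l →
    ∀ (hl : l.idxOf a < l.length), l[l.idxOf a]'hl = a := by
  intro l h
  induction l with
  | nil => simp at h
  | cons b l ih =>
      intro hl
      by_cases hba : b = a
      · simp only [indexOf_cons', if_pos hba] at hl ⊢
        simpa using hba
      · have ha : a ∈ l := by
          rcases List.mem_cons.1 h with h' | h'
          · exact absurd h'.symm hba
          · exact h'
        have := ih ha
        simp only [indexOf_cons', if_neg hba] at hl ⊢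
        simpa using ih ha (by simpa using Nat.lt_of_succ_lt_succ hl)

theorem indexOf_inj' {a b : α} {l : List α} (ha : a ∈ l) (hb : b ∈ l)
    (h : l.idxOf a = l.idxOf b) : a = b := by
  have h1 := getElem_indexOf' ha (indexOf_lt' ha)
  have h2 := getElem_indexOf' hb (indexOf_lt' hb)
  rw [← h1, ← h2]
  congr 1

theorem mem_take_of_indexOf_le {a b : α} {l : List α} (ha : a ∈ l) (hb : b ∈ l)
    (h : l.idxOf a ≤ l.idxOf b) : a ∈ l.take (l.idxOf b + 1) := by
  have h1 : l.idxOf a < l.idxOf b + 1 := Nat.lt_succ_of_le h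
  have h2 : l.idxOf a < l.length := indexOf_lt' ha
  have h3 : l.idxOf a < (l.take (l.idxOf b + 1)).length := by
    simp [List.length_take]; omega
  have : (l.take (l.idxOf b + 1))[l.idxOf a]'h3 = a := by
    rw [List.getElem_take]
    exact getElem_indexOf' ha h2
  rw [← this]
  exact List.getElem_mem _

end IndexOfHelpers

namespace Deploy

variable {n : ℕ}

lemma star_adj_ns (i : Fin n) : (starGraph n).Adj none (some i) := by
  simp [starGraph, SimpleGraph.fromRel_adj]

lemma star_adj_sn (i : Fin n) : (starGraph n).Adj (some i) none := (star_adj_ns i).symm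

lemma star_adj_some {i : Fin n} {v} (h : (starGraph n).Adj (some i) v) : v = none := by
  simp [starGraph, SimpleGraph.fromRel_adj] at h; tauto

/-- The closed walk visiting the leaves in the order of the list. -/
def toWalk : List (Fin n) → (starGraph n).Walk none none
  | [] => .nil
  | i :: L => .cons (star_adj_ns i) (.cons (star_adj_sn i) (toWalk L))

/-- The combined scan effect of a single out-and-back excursion to leaf `i`. -/
def stepL (i : Fin n) (s : St (Option (Fin n)) ℕ) : St (Option (Fin n)) ℕ :=
  visitVtx (starWV n) none (crossEdge (starWE n) s(some i, none)
    (visitVtx (starWV n) (some i) (crossEdge (starWE n) s(none, some i) s)))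

lemma scanWalk_toWalk (L : List (Fin n)) (s : St (Option (Fin n)) ℕ) :
    scanWalk (starWE n) (starWV n) (toWalk L) s = L.foldl (fun s i => stepL i s) s := by
  induction L generalizing s with
  | nil => rfl
  | cons i L ih => simpa [toWalk, scanWalk, stepL] using ih _

lemma stepL_eq (i : Fin n) (s : St (Option (Fin n)) ℕ) (h0 : none ∈ s.visited) :
    stepL i s =
      if some i ∈ s.visited then
        (if s.curr < i + 1 then ⟨s.visited, i + 1, s.add + (i + 1 - s.curr)⟩ else s)
      else
        (if s.curr < i + 2 then
          ⟨insert (some i) s.visited, i + 1, s.add + (i + 1 - s.curr) + 1⟩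
        else ⟨insert (some i) s.visited, s.curr - 1, s.add⟩) := by
  obtain ⟨vis, c, a⟩ := s
  have he1 : starWE n s(none, some i) = i + 1 := rfl
  have he2 : starWE n s(some i, none) = i + 1 := rfl
  have hv1 : starWV n (some i) = 1 := rfl
  by_cases h1 : some i ∈ vis
  · by_cases h2 : c < i + 1
    · simp [stepL, crossEdge, visitVtx, he1, he2, hv1, h1, h2, h0, starWV]
    · simp [stepL, crossEdge, visitVtx, he1, he2, hv1, h1, h2, h0, starWV]
  · by_cases h2 : c < i + 1
    · have h3 : ¬ ((i : ℕ) + 1 < 1) := by omega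
      have h4 : (i : ℕ) < i + 1 := by omega
      have h5 : c < i + 2 := by omega
      simp [stepL, crossEdge, visitVtx, he1, he2, hv1, h1, h2, h0, starWV, h3, h4, h5] <;> omega
    · by_cases h5 : c < i + 2
      · have hc : c = i + 1 := by omega
        subst hc
        have h3 : ¬ ((i : ℕ) + 1 < 1) := by omega
        have h4 : (i : ℕ) + 1 - 1 < i + 1 := by omega
        simp [stepL, crossEdge, visitVtx, he1, he2, hv1, h1, h2, h0, starWV, h3, h4] <;> omega
      · have h3 : ¬ (c < 1) := by omega
        have h4 : ¬ (c - 1 < i + 1) := by omega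
        simp [stepL, crossEdge, visitVtx, he1, he2, hv1, h1, h2, h0, starWV, h3, h4, h5]

/-- The scan invariant. -/
def Pinv (n : ℕ) (s : St (Option (Fin n)) ℕ) : Prop :=
  none ∈ s.visited ∧ s.curr + s.visited.card = n + 1 + s.add

lemma stepL_visited (i : Fin n) (s) (h0 : none ∈ s.visited) :
    (stepL i s).visited = insert (some i) s.visited := by
  rw [stepL_eq i s h0]
  split_ifs with h1 h2 h3 <;>
    simp_all [Finset.insert_eq_self]

lemma stepL_curr (i : Fin n) (s) (h0 : none ∈ s.visited) :
    (i : ℕ) + 1 ≤ (stepL i s).curr := by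
  rw [stepL_eq i s h0]
  split_ifs with h1 h2 h3 <;>
    simp_all <;> omega

lemma stepL_add (i : Fin n) (s) (h0 : none ∈ s.visited) :
    s.add ≤ (stepL i s).add := by
  rw [stepL_eq i s h0]
  split_ifs with h1 h2 h3 <;>
    simp_all <;> omega

lemma stepL_Pinv (i : Fin n) (s) (hP : Pinv n s) : Pinv n (stepL i s) := by
  obtain ⟨h0, hc⟩ := hP
  rw [Pinv, stepL_eq i s h0]
  split_ifs with h1 h2 h3 <;>
    simp_all [Finset.card_insert_of_notMem, Finset.mem_insert] <;> omega

lemma fold_Pinv (L : List (Fin n)) (s) (hP : Pinv n s) :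
    Pinv n (L.foldl (fun s i => stepL i s) s) := by
  induction L generalizing s with
  | nil => exact hP
  | cons i L ih => exact ih _ (stepL_Pinv i s hP)

lemma fold_add (L : List (Fin n)) (s) (h0 : none ∈ s.visited) :
    s.add ≤ (L.foldl (fun s i => stepL i s) s).add := by
  induction L generalizing s with
  | nil => exact le_refl _
  | cons i L ih =>
      refine le_trans (stepL_add i s h0) (le_trans (ih _ ?_) (le_of_eq rfl))
      rw [stepL_visited i s h0]; exact Finset.mem_insert_of_mem h0

lemma fold_visited (L : List (Fin n)) (s) (h0 : none ∈ s.visited) :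
    (L.foldl (fun s i => stepL i s) s).visited = s.visited ∪ L.toFinset.image some := by
  induction L generalizing s with
  | nil => simp
  | cons i L ih =>
      have h0' : none ∈ (stepL i s).visited := by
        rw [stepL_visited i s h0]; exact Finset.mem_insert_of_mem h0
      rw [List.foldl_cons, ih _ h0', stepL_visited i s h0]
      ext x
      simp [Finset.mem_insert, Finset.mem_union, or_assoc]

/-- Initial state of the scan. -/
def init (n : ℕ) : St (Option (Fin n)) ℕ := ⟨{none}, n, 0⟩

lemma init_Pinv : Pinv n (init n) := by
  constructor
  · simp [init]
  · simp [init]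

lemma add_bound (L : List (Fin n)) (j : Fin n) (hj : j ∈ L) :
    (j : ℕ) + 1 + ((L.take (L.idxOf j + 1)).toFinset.card) ≤
      n + (L.foldl (fun s i => stepL i s) (init n)).add := by
  set m := L.idxOf j with hm
  have hml : m < L.length := indexOf_lt' hj
  have hQ : L.take (m + 1) = L.take m ++ [j] := by
    rw [List.take_succ]
    congr
    rw [List.getElem?_eq_getElem hml, getElem_indexOf' hj hml]
    rfl
  have hsplit : L.take (m + 1) ++ L.drop (m + 1) = L := List.take_append_drop _ _
  set f : St (Option (Fin n)) ℕ → Fin n → St (Option (Fin n)) ℕ := fun s i => stepL i s with hf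
  set s1 := (L.take (m + 1)).foldl f (init n) with hs1
  have h0i : none ∈ (init n).visited := by simp [init]
  have hP1 : Pinv n s1 := fold_Pinv _ _ init_Pinv
  have hs1' : s1 = stepL j ((L.take m).foldl f (init n)) := by
    rw [hs1, hQ, List.foldl_append]
    rfl
  have h0m : none ∈ ((L.take m).foldl f (init n)).visited := (fold_Pinv _ _ init_Pinv).1
  have hcurr : (j : ℕ) + 1 ≤ s1.curr := by rw [hs1']; exact stepL_curr _ _ h0m
  have hvis : s1.visited = {none} ∪ (L.take (m + 1)).toFinset.image some :=
    fold_visited _ _ h0i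
  have hcard : s1.visited.card = 1 + (L.take (m + 1)).toFinset.card := by
    rw [hvis, Finset.card_union_of_disjoint (by simp), Finset.card_singleton,
      Finset.card_image_of_injective _ (Option.some_injective _)]
  have hmono : s1.add ≤ (L.foldl f (init n)).add := by
    conv_rhs => rw [← hsplit]
    rw [List.foldl_append]
    exact fold_add _ _ hP1.1
  have := hP1.2
  omega

/-- Support of `toWalk`. -/
lemma support_toWalk (i : Fin n) (L : List (Fin n)) :
    (toWalk (i :: L)).support = none :: some i :: (toWalk L).support := rfl

lemma mem_support_toWalk (L : List (Fin n)) (k : Fin n) :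
    some k ∈ (toWalk L).support ↔ k ∈ L := by
  induction L with
  | nil => simp [toWalk]
  | cons i L ih => simp [support_toWalk, ih]

lemma indexOf_support_toWalk (L : List (Fin n)) (k : Fin n) (hk : k ∈ L) :
    (toWalk L).support.idxOf (some k) = 2 * L.idxOf k + 1 := by
  induction L with
  | nil => simp at hk
  | cons i L ih =>
      rw [support_toWalk]
      by_cases hik : i = k
      · subst hik
        rw [indexOf_cons', indexOf_cons', indexOf_cons']
        simp
      · have hk' : k ∈ L := by
          rcases List.mem_cons.1 hk with h | h
          · exact absurd h.symm hik
          · exact h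
        have h1 : (none : Option (Fin n)) ≠ some k := by simp
        have h2 : some i ≠ some k := by simp [hik]
        rw [indexOf_cons', if_neg h1, indexOf_cons', if_neg h2, ih hk',
          indexOf_cons', if_neg hik]
        ring

/-- Every closed walk from the center is `toWalk L` for some list `L`. -/
lemma exists_toWalk (p : (starGraph n).Walk none none) : ∃ L, p = toWalk L := by
  have key : ∀ (m : ℕ) (p : (starGraph n).Walk none none), p.length ≤ m →
      ∃ L, p = toWalk L := by
    intro m
    induction m with
    | zero =>
        intro p hp
        cases p with
        | nil => exact ⟨[], rfl⟩
        | cons h q => simp [SimpleGraph.Walk.length_cons] at hp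
    | succ m ih =>
        intro p hp
        cases p with
        | nil => exact ⟨[], rfl⟩
        | @cons _ v _ h q =>
            obtain ⟨i, rfl⟩ : ∃ i, v = some i := by
              cases v with
              | none => exact absurd rfl h.ne
              | some i => exact ⟨i, rfl⟩
            cases q with
            | @cons _ w _ h' r =>
                have hw : w = none := star_adj_some h'
                subst hw
                obtain ⟨L, rfl⟩ := ih r (by
                  simp [SimpleGraph.Walk.length_cons] at hp ⊢
                  omega)
                exact ⟨i :: L, rfl⟩
  exact key p.length p le_rfl

/-- Pigeonhole: if for each `j` at most `n - j` indices `k` have `f k ≤ f j`,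
then `f` is strictly antitone. -/
lemma antitone_of_rank_bound (f : Fin n → ℕ) (hinj : Function.Injective f)
    (hr : ∀ j : Fin n, (Finset.univ.filter (fun k => f k ≤ f j)).card ≤ n - (j : ℕ)) :
    ∀ i j : Fin n, i < j → f j < f i := by
  intro i j hij
  have hM : (Finset.Ici i).Nonempty := ⟨i, Finset.mem_Ici.2 le_rfl⟩
  obtain ⟨k₀, hk₀, hmax⟩ := Finset.exists_max_image (Finset.Ici i) f hM
  have hsub : Finset.Ici i ⊆ Finset.univ.filter (fun k => f k ≤ f k₀) := by
    intro k hk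
    exact Finset.mem_filter.2 ⟨Finset.mem_univ _, hmax k hk⟩
  have hcard : n - (i : ℕ) ≤ n - (k₀ : ℕ) := by
    calc n - (i : ℕ) = (Finset.Ici i).card := (Fin.card_Ici i).symm
    _ ≤ (Finset.univ.filter (fun k => f k ≤ f k₀)).card := Finset.card_le_card hsub
    _ ≤ n - (k₀ : ℕ) := hr k₀
  have hik₀ : i ≤ k₀ := Finset.mem_Ici.1 hk₀
  have hk₀i : k₀ = i := by
    have h1 : (k₀ : ℕ) < n := k₀.isLt
    have h2 : (i : ℕ) ≤ (k₀ : ℕ) := hik₀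
    have : (k₀ : ℕ) = (i : ℕ) := by omega
    exact Fin.ext this
  subst hk₀i
  have hle : f j ≤ f k₀ := hmax j (Finset.mem_Ici.2 hij.le)
  have hne : f j ≠ f k₀ := fun h => (Fin.lt_iff_val_lt_val.1 hij).ne' (congrArg Fin.val (hinj h))
  exact lt_of_le_of_ne hle hne

/-- The decreasing list of leaves `[k-1, …, 0]`. -/
def descL : (k : ℕ) → k ≤ n → List (Fin n)
  | 0, _ => []
  | (k + 1), h => ⟨k, h⟩ :: descL k (Nat.le_of_succ_le h)

lemma mem_descL {k : ℕ} (h : k ≤ n) (i : Fin n) : i ∈ descL k h ↔ (i : ℕ) < k := by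
  induction k with
  | zero => simp [descL]
  | succ k ih =>
      simp only [descL, List.mem_cons, ih]
      constructor
      · rintro (rfl | h')
        · exact Nat.lt_succ_self k
        · omega
      · intro h'
        by_cases hik : (i : ℕ) = k
        · exact Or.inl (Fin.ext hik)
        · exact Or.inr (by omega)

lemma indexOf_descL {k : ℕ} (h : k ≤ n) (i : Fin n) (hi : (i : ℕ) < k) :
    (descL k h).idxOf i = k - 1 - (i : ℕ) := by
  induction k with
  | zero => omega
  | succ k ih =>
      rw [descL, indexOf_cons']
      by_cases hik : (⟨k, h⟩ : Fin n) = i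
      · rw [if_pos hik]
        have : (i : ℕ) = k := by rw [← hik]
        omega
      · have hik' : (i : ℕ) < k := by
          have : (i : ℕ) ≠ k := fun hh => hik (Fin.ext hh.symm)
          omega
        rw [if_neg hik, ih _ hik']
        omega

lemma descL_scan {k : ℕ} (h : k ≤ n) (s : St (Option (Fin n)) ℕ)
    (h0 : none ∈ s.visited) (hc : s.curr = k + 1)
    (hfresh : ∀ m : Fin n, (m : ℕ) < k → some m ∉ s.visited) :
    ((descL k h).foldl (fun s i => stepL i s) s).add = s.add := by
  induction k generalizing s with
  | zero => simp [descL]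
  | succ k ih =>
      rw [descL, List.foldl_cons]
      set i : Fin n := ⟨k, h⟩ with hi
      have hnotmem : some i ∉ s.visited := hfresh i (by simp [hi])
      have hstep : stepL i s = ⟨insert (some i) s.visited, s.curr - 1, s.add⟩ := by
        rw [stepL_eq i s h0, if_neg hnotmem, if_neg (by simp [hi]; omega)]
      rw [hstep] at *
      refine ih _ _ ?_ ?_ ?_
      · exact Finset.mem_insert_of_mem h0
      · simp [hc]
      · intro m hm
        simp only [Finset.mem_insert]
        push_neg
        constructor
        · intro hcon
          have : (m : ℕ) = k := by
            have := congrArg (Option.map Fin.val) hcon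
            simpa [hi] using this
          omega
        · exact hfresh m (by omega)

lemma sum_starWV : (∑ v, starWV n v) = n := by
  rw [Fintype.sum_option]
  simp [starWV]

lemma init_eq : visitVtx (starWV n) none ⟨∅, ∑ v, starWV n v, 0⟩ = init n := by
  rw [sum_starWV]
  simp [visitVtx, init, starWV]

lemma agentCount_toWalk (L : List (Fin n)) :
    agentCount (starWE n) (starWV n) (toWalk L) =
      n + (L.foldl (fun s i => stepL i s) (init n)).add := by
  rw [agentCount, init_eq, scanWalk_toWalk, sum_starWV]

lemma covering_iff (L : List (Fin n)) (hcov : IsCovering (toWalk L)) :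
    ∀ i : Fin n, i ∈ L := fun i => (mem_support_toWalk L i).1 (hcov (some i))

lemma lower_bound (hn : 0 < n) (L : List (Fin n)) (hcov : ∀ i : Fin n, i ∈ L) :
    (n : ℕ) + 1 ≤ n + (L.foldl (fun s i => stepL i s) (init n)).add := by
  set j : Fin n := ⟨n - 1, by omega⟩ with hj
  have hjL : j ∈ L := hcov j
  have hb := add_bound L j hjL
  have hjv : (j : ℕ) = n - 1 := rfl
  have hne : (L.take (L.idxOf j + 1)).toFinset.Nonempty := by
    refine ⟨j, List.mem_toFinset.2 ?_⟩
    exact mem_take_of_indexOf_le hjL hjL le_rfl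
  have hc := Finset.card_pos.2 hne
  omega

lemma order_of_min (L : List (Fin n)) (hcov : ∀ i : Fin n, i ∈ L)
    (hadd : (L.foldl (fun s i => stepL i s) (init n)).add ≤ 1) :
    ∀ i j : Fin n, i < j → L.idxOf j < L.idxOf i := by
  have hinj : Function.Injective (fun k : Fin n => L.idxOf k) :=
    fun a b h => indexOf_inj' (hcov a) (hcov b) h
  refine antitone_of_rank_bound _ hinj ?_
  intro j
  have hb := add_bound L j (hcov j)
  have hsub : Finset.univ.filter (fun k : Fin n => L.idxOf k ≤ L.idxOf j) ⊆
      (L.take (L.idxOf j + 1)).toFinset := by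
    intro k hk
    exact List.mem_toFinset.2
      (mem_take_of_indexOf_le (hcov k) (hcov j) (Finset.mem_filter.1 hk).2)
  have hc := Finset.card_le_card hsub
  omega

/-- The optimal list. -/
def optL (n : ℕ) : List (Fin n) := descL n le_rfl

lemma optL_covering : IsCovering (toWalk (optL n)) := by
  intro v
  cases v with
  | none => exact SimpleGraph.Walk.start_mem_support _
  | some i => exact (mem_support_toWalk _ i).2 ((mem_descL le_rfl i).2 i.isLt)

lemma optL_count (hn : 0 < n) :
    agentCount (starWE n) (starWV n) (toWalk (optL n)) = n + 1 := by
  rw [agentCount_toWalk]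
  obtain ⟨m, rfl⟩ : ∃ m, n = m + 1 := ⟨n - 1, by omega⟩
  have hrw : optL (m + 1) = ⟨m, Nat.lt_succ_self m⟩ :: descL m (Nat.le_succ m) := by
    rfl
  rw [hrw, List.foldl_cons]
  set i : Fin (m + 1) := ⟨m, Nat.lt_succ_self m⟩ with hi
  have h0 : none ∈ (init (m + 1)).visited := by simp [init]
  have hstep : stepL i (init (m + 1)) =
      ⟨insert (some i) {none}, m + 1, 1⟩ := by
    rw [stepL_eq i _ h0, if_neg (by simp [init]), if_pos (by simp [init, hi])]
    simp [init, hi]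
  rw [hstep]
  have := descL_scan (n := m + 1) (Nat.le_succ m) ⟨insert (some i) {none}, m + 1, 1⟩
    (by simp) rfl ?_
  · rw [this]
  · intro mm hmm
    simp only [Finset.mem_insert, Finset.mem_singleton]
    push_neg
    refine ⟨fun hcon => ?_, by simp⟩
    have : (mm : ℕ) = m := by
      have := congrArg (Option.map Fin.val) hcon
      simpa [hi] using this
    omega

lemma optL_indexOf (i : Fin n) : (optL n).idxOf i = n - 1 - (i : ℕ) :=
  indexOf_descL le_rfl i i.isLt

end Deploy

/-- for the star with center `v_s` (weight 0) and `n ≥ 1` leaves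
`b_1, …, b_n`, where leaf `b_i` has vertex weight `1` and its edge has weight
`i`, the minimum agent count over all closed covering walks from the center
equals `n + 1`; it is attained by visiting the leaves in decreasing order of
the edge weights `b_n, …, b_1`, and every closed covering walk with agent
count `n + 1` makes its first visits to the leaves exactly in this decreasing
order. -/
theorem star_decreasing_order_optimal (n : ℕ) (hn : 0 < n) :
    (∃ p : (Deploy.starGraph n).Walk none none,
      Deploy.IsCovering p ∧
      Deploy.agentCount (Deploy.starWE n) (Deploy.starWV n) p = n + 1 ∧
      ∀ i j : Fin n, i < j →
        p.support.idxOf (some j) < p.support.idxOf (some i)) ∧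
    (∀ q : (Deploy.starGraph n).Walk none none, Deploy.IsCovering q →
      n + 1 ≤ Deploy.agentCount (Deploy.starWE n) (Deploy.starWV n) q) ∧
    (∀ q : (Deploy.starGraph n).Walk none none, Deploy.IsCovering q →
      Deploy.agentCount (Deploy.starWE n) (Deploy.starWV n) q = n + 1 →
      ∀ i j : Fin n, i < j →
        q.support.idxOf (some j) < q.support.idxOf (some i)) := by
  constructor
  · refine ⟨Deploy.toWalk (Deploy.optL n), Deploy.optL_covering, Deploy.optL_count hn, ?_⟩
    intro i j hij
    have hiL : i ∈ Deploy.optL n := (Deploy.mem_descL le_rfl i).2 i.isLt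
    have hjL : j ∈ Deploy.optL n := (Deploy.mem_descL le_rfl j).2 j.isLt
    rw [Deploy.indexOf_support_toWalk _ _ hjL, Deploy.indexOf_support_toWalk _ _ hiL,
      Deploy.optL_indexOf, Deploy.optL_indexOf]
    have h1 := j.isLt
    have h2 := Fin.lt_iff_val_lt_val.1 hij
    omega
  constructor
  · intro q hq
    obtain ⟨L, rfl⟩ := Deploy.exists_toWalk q
    have hcov := Deploy.covering_iff L hq
    rw [Deploy.agentCount_toWalk]
    exact Deploy.lower_bound hn L hcov
  · intro q hq hcount i j hij
    obtain ⟨L, rfl⟩ := Deploy.exists_toWalk q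
    have hcov := Deploy.covering_iff L hq
    rw [Deploy.agentCount_toWalk] at hcount
    have hadd : (L.foldl (fun s i => Deploy.stepL i s) (Deploy.init n)).add ≤ 1 := by omega
    have hord := Deploy.order_of_min L hcov hadd i j hij
    rw [Deploy.indexOf_support_toWalk _ _ (hcov j), Deploy.indexOf_support_toWalk _ _ (hcov i)]
    omega
end
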